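/- arXiv:1803.00619 — 4 statements merged into one kernel-verified Lean document; each statement's English description precedes it below -/
import Mathlib

section
/- Let r ≥ 3 and let α ∈ S(n, r). Then the projective linear set O(α) is the union of the q^n + 1 affine sets A(α) and A(1/(α + ξ)) for ξ ranging over all elements of F_{q^n}, and these q^n + 1 affine sets are pairwise disjoint; in particular O(α) is partitioned into exactly q^n + 1 affine sets. -/
open Polynomial Matrix

/-- The affine set `A(α) = {a α + b : a, b ∈ K, a ≠ 0}`. -/
def affineSet (K : Type*) {L : Type*} [Field K] [Field L] [Algebra K L] (α : L) : Set L :=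
  {β | ∃ a b : K, a ≠ 0 ∧ β = algebraMap K L a * α + algebraMap K L b}

/-- The projective linear set
`O(α) = {(a α + b) / (c α + d) : a, b, c, d ∈ K, a d - b c ≠ 0}`. -/
def projSet (K : Type*) {L : Type*} [Field K] [Field L] [Algebra K L] (α : L) : Set L :=
  {β | ∃ a b c d : K, a * d - b * c ≠ 0 ∧
    β = (algebraMap K L a * α + algebraMap K L b) /
      (algebraMap K L c * α + algebraMap K L d)}

/-- Let `r ≥ 3` and `α ∈ S(n, r)`.  Then the projective linear set `O(α)`
is the union of the `q^n + 1` affine sets `A(α)` and `A(1/(α + ξ))` for `ξ` ranging over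
`F_{q^n}`, these affine sets are pairwise disjoint, and there are exactly `q^n + 1` of them. -/
theorem projSet_partition_into_affineSets
    (p t n r : ℕ) (hp : p.Prime) (ht : 0 < t) (hn : 0 < n) (hr : 3 ≤ r)
    (K L : Type*) [Field K] [Field L] [Algebra K L] [Fintype K] [Fintype L]
    (hK : Fintype.card K = (p ^ t) ^ n) (hL : Fintype.card L = (p ^ t) ^ (n * r))
    (α : L) (hα : (minpoly K α).natDegree = r) :
    (projSet K α = affineSet K α ∪ ⋃ ξ : K, affineSet K (α + algebraMap K L ξ)⁻¹) ∧
    (∀ ξ : K, Disjoint (affineSet K α) (affineSet K (α + algebraMap K L ξ)⁻¹)) ∧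
    (∀ ξ₁ ξ₂ : K, ξ₁ ≠ ξ₂ →
        Disjoint (affineSet K (α + algebraMap K L ξ₁)⁻¹)
          (affineSet K (α + algebraMap K L ξ₂)⁻¹)) ∧
    {A : Set L | A = affineSet K α ∨
        ∃ ξ : K, A = affineSet K (α + algebraMap K L ξ)⁻¹}.ncard = (p ^ t) ^ n + 1 := by
  haveI : Module.Finite K L := Module.Finite.of_finite
  -- `1, α, α²` are linearly independent over `K`.
  have hquad : ∀ a b c : K,
      algebraMap K L a * α ^ 2 + algebraMap K L b * α + algebraMap K L c = 0 →
      a = 0 ∧ b = 0 ∧ c = 0 := by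
    intro a b c h
    set q : K[X] := C a * X ^ 2 + C b * X + C c with hq
    have haev : aeval α q = 0 := by simp [hq]; linear_combination h
    have hq0 : q = 0 := by
      by_contra h0
      have h1 := Polynomial.natDegree_le_natDegree <|
        minpoly.degree_le_of_ne_zero K α h0 haev
      have h2 : q.natDegree ≤ 2 := natDegree_quadratic_le
      omega
    refine ⟨?_, ?_, ?_⟩
    · have := congrArg (fun p => Polynomial.coeff p 2) hq0; simpa [hq] using this
    · have := congrArg (fun p => Polynomial.coeff p 1) hq0; simpa [hq] using this
    · have := congrArg (fun p => Polynomial.coeff p 0) hq0; simpa [hq] using this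
  have hlin : ∀ b c : K, algebraMap K L b * α + algebraMap K L c = 0 → b = 0 ∧ c = 0 := by
    intro b c h
    have := hquad 0 b c (by simpa using h)
    exact ⟨this.2.1, this.2.2⟩
  have hne : ∀ ξ : K, α + algebraMap K L ξ ≠ 0 := by
    intro ξ h
    have := (hlin 1 ξ (by simpa using h)).1
    exact one_ne_zero this
  have hinj : Function.Injective (algebraMap K L) := (algebraMap K L).injective
  -- Disjointness of `A(α)` and `A((α+ξ)⁻¹)`.
  have hd1 : ∀ ξ : K, Disjoint (affineSet K α) (affineSet K (α + algebraMap K L ξ)⁻¹) := by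
    intro ξ
    rw [Set.disjoint_left]
    rintro β ⟨a, b, ha, rfl⟩ ⟨a', b', ha', heq⟩
    have h2 : algebraMap K L a * α ^ 2 + algebraMap K L (b + a * ξ - b') * α +
        algebraMap K L (b * ξ - a' - b' * ξ) = 0 := by
      field_simp [hne ξ] at heq
      simp only [map_add, map_sub, _root_.map_mul]
      linear_combination heq
    exact ha (hquad _ _ _ h2).1
  -- Disjointness of `A((α+ξ₁)⁻¹)` and `A((α+ξ₂)⁻¹)`.
  have hd2 : ∀ ξ₁ ξ₂ : K, ξ₁ ≠ ξ₂ →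
      Disjoint (affineSet K (α + algebraMap K L ξ₁)⁻¹)
        (affineSet K (α + algebraMap K L ξ₂)⁻¹) := by
    intro ξ₁ ξ₂ hξ
    rw [Set.disjoint_left]
    rintro β ⟨a, b, ha, rfl⟩ ⟨a', b', ha', heq⟩
    have h2 : algebraMap K L (b - b') * α ^ 2 +
        algebraMap K L (a - a' + (b - b') * (ξ₁ + ξ₂)) * α +
        algebraMap K L (a * ξ₂ - a' * ξ₁ + (b - b') * (ξ₁ * ξ₂)) = 0 := by
      field_simp [hne ξ₁, hne ξ₂] at heq
      simp only [map_add, map_sub, _root_.map_mul]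
      linear_combination heq
    obtain ⟨e1, e2, e3⟩ := hquad _ _ _ h2
    have h4 : a * (ξ₂ - ξ₁) = 0 := by
      linear_combination e3 - ξ₁ * e2 + ξ₁ ^ 2 * e1
    rcases mul_eq_zero.mp h4 with h | h
    · exact ha h
    · exact hξ (sub_eq_zero.mp h).symm
  -- Each affine set is nonempty.
  have hmem : ∀ γ : L, γ ∈ affineSet K γ := by
    intro γ; exact ⟨1, 0, one_ne_zero, by simp⟩
  refine ⟨?_, hd1, hd2, ?_⟩
  · -- The union decomposition.
    ext β
    constructor
    · rintro ⟨a, b, c, d, hdet, rfl⟩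
      by_cases hc : c = 0
      · subst hc
        have had : a ≠ 0 ∧ d ≠ 0 := by
          constructor <;> rintro rfl <;> simp at hdet
        left
        refine ⟨a / d, b / d, div_ne_zero had.1 had.2, ?_⟩
        have hd' : algebraMap K L d ≠ 0 := fun h => had.2 (hinj (by simpa using h))
        rw [map_div₀, map_div₀]
        field_simp
        simp [hd']
      · right
        refine Set.mem_iUnion.mpr ⟨d / c, ?_⟩
        refine ⟨(b * c - a * d) / (c * c), a / c, ?_, ?_⟩
        · apply div_ne_zero
          · intro h; apply hdet; linear_combination -h
          · exact mul_ne_zero hc hc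
        · have hc' : algebraMap K L c ≠ 0 := fun h => hc (hinj (by simpa using h))
          have h1 : α + algebraMap K L (d / c) ≠ 0 := hne _
          have h2 : algebraMap K L c * α + algebraMap K L d ≠ 0 := by
            intro h
            obtain ⟨h3, -⟩ := hlin c d h
            exact hc h3
          simp only [map_div₀, map_sub, _root_.map_mul]
          rw [map_div₀] at h1
          have h3 : α + algebraMap K L d / algebraMap K L c =
              (algebraMap K L c * α + algebraMap K L d) / algebraMap K L c := by
            field_simp
          rw [h3]
          field_simp
          have h2' : α * algebraMap K L c + algebraMap K L d ≠ 0 := by rwa [mul_comm]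
          field_simp
          ring
    · rintro (⟨a, b, ha, rfl⟩ | hβ)
      · refine ⟨a, b, 0, 1, by simpa using ha, by simp⟩
      · obtain ⟨ξ, a, b, ha, rfl⟩ := Set.mem_iUnion.mp hβ
        refine ⟨b, a + b * ξ, 1, ξ, by simpa using ha, ?_⟩
        have h1 : α + algebraMap K L ξ ≠ 0 := hne ξ
        simp only [map_add, _root_.map_mul, _root_.map_one, one_mul]
        field_simp
        ring
  · -- Cardinality.
    have hSeq : {A : Set L | A = affineSet K α ∨
        ∃ ξ : K, A = affineSet K (α + algebraMap K L ξ)⁻¹} =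
        insert (affineSet K α)
          (Set.range fun ξ : K => affineSet K (α + algebraMap K L ξ)⁻¹) := by
      ext A
      simp [Set.mem_insert_iff, Set.mem_range, eq_comm]
    rw [hSeq]
    have hnotmem : affineSet K α ∉
        Set.range fun ξ : K => affineSet K (α + algebraMap K L ξ)⁻¹ := by
      rintro ⟨ξ, hξ⟩
      have hdisj := hd1 ξ
      have hm : (α + algebraMap K L ξ)⁻¹ ∈ affineSet K α := by
        rw [← hξ]; exact hmem _
      exact (hdisj.ne_of_mem hm (hmem _)) rfl
    have hfinj : Function.Injective
        fun ξ : K => affineSet K (α + algebraMap K L ξ)⁻¹ := by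
      intro ξ₁ ξ₂ h
      by_contra hne'
      have := hd2 ξ₁ ξ₂ hne'
      simp only at h
      rw [h] at this
      exact (this.ne_of_mem (hmem _) (hmem _)) rfl
    rw [Set.ncard_insert_of_notMem hnotmem (Set.finite_range _)]
    have : (Set.range fun ξ : K => affineSet K (α + algebraMap K L ξ)⁻¹).ncard
        = Fintype.card K := by
      rw [← Set.image_univ, Set.ncard_image_of_injective _ hfinj, Set.ncard_univ,
        Nat.card_eq_fintype_card]
    rw [this, hK]
end

section
/- Let n be a prime number with n > 2, n ≠ p, such that n does not divide q^n − 1 but n divides q^n + 1. Let A = [[a, b], [c, d]] ∈ GL(2, q^n) be a matrix of order n whose minimal polynomial is an irreducible quadratic over F_{q^n}. Then every root (in an algebraic closure of F_{q^n}) of the polynomial F_n(x) = c·x^{q^n + 1} + d·x^{q^n} − a·x − b has degree exactly n over F_{q^n}; equivalently, F_n(x) factors over F_{q^n} into distinct monic irreducible polynomials all of degree n. -/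
open Polynomial Matrix

lemma aux_dvd_of_pow_sub_one_dvd {Q d n : ℕ} (hQ : 2 ≤ Q) (hd : 0 < d)
    (h : Q ^ d - 1 ∣ Q ^ n - 1) : d ∣ n := by
  have hQ1 : ∀ m : ℕ, 1 ≤ Q ^ m := fun m => Nat.one_le_pow _ _ (by omega)
  have hz : ((Q : ℤ) ^ d - 1) ∣ ((Q : ℤ) ^ n - 1) := by
    have := Int.natCast_dvd_natCast.2 h
    push_cast [Nat.cast_sub (hQ1 d), Nat.cast_sub (hQ1 n)] at this
    exact_mod_cast this
  set r := n % d with hr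
  set s := n / d with hsdef
  have hn : n = d * s + r := (Nat.div_add_mod n d).symm
  have h2 : ((Q : ℤ) ^ d - 1) ∣ ((Q : ℤ) ^ (d * s) - 1) := by
    have := sub_dvd_pow_sub_pow ((Q : ℤ) ^ d) 1 s
    simpa [← pow_mul] using this
  have h3 : ((Q : ℤ) ^ d - 1) ∣ ((Q : ℤ) ^ r - 1) := by
    have key : ((Q : ℤ) ^ n - 1) - ((Q : ℤ) ^ (d * s) - 1) * (Q : ℤ) ^ r
        = (Q : ℤ) ^ r - 1 := by
      have hpow : (Q : ℤ) ^ n = (Q : ℤ) ^ (d * s) * (Q : ℤ) ^ r := by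
        rw [← pow_add, ← hn]
      rw [hpow]; ring
    rw [← key]
    exact dvd_sub hz (h2.mul_right _)
  have hrd : r < d := Nat.mod_lt _ hd
  have hrn : ((Q : ℤ) ^ r - 1) = 0 := by
    rcases h3 with ⟨k, hk⟩
    by_contra hne
    have hpos : 0 < (Q : ℤ) ^ r - 1 := by
      have : (1 : ℤ) ≤ (Q : ℤ) ^ r := by exact_mod_cast hQ1 r
      omega
    have hlt : (Q : ℤ) ^ r - 1 < (Q : ℤ) ^ d - 1 := by
      have : (Q : ℤ) ^ r < (Q : ℤ) ^ d := by
        have := Nat.pow_lt_pow_right (by omega : 1 < Q) hrd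
        exact_mod_cast this
      omega
    have := Int.le_of_dvd hpos ⟨k, hk⟩
    omega
  have hQr : Q ^ r = 1 := by
    have : ((Q : ℤ) ^ r) = 1 := by omega
    exact_mod_cast this
  have hr0 : r = 0 := by
    by_contra h0
    have hle : Q ≤ Q ^ r := Nat.le_self_pow h0 Q
    omega
  exact Nat.dvd_of_mod_eq_zero (by omega)

/-- Let `n` be a prime with `n > 2`, `n ≠ p`, such that `n ∤ q^n - 1` but
`n ∣ q^n + 1` (with `q = p ^ t`).  Let `A = !![a, b; c, d] ∈ GL(2, q^n)` be a matrix of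
order `n` whose minimal polynomial is an irreducible quadratic over `F_{q^n}`.  Then every
root (in an algebraic closure of `F_{q^n}`) of the polynomial
`F_n(x) = c x^{q^n + 1} + d x^{q^n} - a x - b` has degree exactly `n` over `F_{q^n}`. -/
theorem roots_of_Fn_have_degree_n
    (p t n : ℕ) (hp : p.Prime) (ht : 0 < t) (hn : n.Prime) (hn2 : 2 < n) (hnp : n ≠ p)
    (hndvd : ¬ n ∣ (p ^ t) ^ n - 1) (hdvd : n ∣ (p ^ t) ^ n + 1)
    (K : Type*) [Field K] [Fintype K] (hK : Fintype.card K = (p ^ t) ^ n)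
    (A : GL (Fin 2) K) (hord : orderOf A = n)
    (hirr : Irreducible (minpoly K (A : Matrix (Fin 2) (Fin 2) K)))
    (hdeg : (minpoly K (A : Matrix (Fin 2) (Fin 2) K)).natDegree = 2)
    (β : AlgebraicClosure K)
    (hβ : Polynomial.aeval β
        (C ((A : Matrix (Fin 2) (Fin 2) K) 1 0) * X ^ ((p ^ t) ^ n + 1) +
          C ((A : Matrix (Fin 2) (Fin 2) K) 1 1) * X ^ ((p ^ t) ^ n) -
          C ((A : Matrix (Fin 2) (Fin 2) K) 0 0) * X -
          C ((A : Matrix (Fin 2) (Fin 2) K) 0 1)) = 0) :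
    (minpoly K β).natDegree = n := by
  classical
  set M : Matrix (Fin 2) (Fin 2) K := (A : Matrix (Fin 2) (Fin 2) K) with hM
  set Q : ℕ := (p ^ t) ^ n with hQdef
  have hQcard : Fintype.card K = Q := hK
  have hQ2 : 2 ≤ Q := hQcard ▸ Fintype.one_lt_card
  -- characteristic
  have hcharK : CharP K p := by
    have h1 : ((Fintype.card K : K)) = 0 := FiniteField.cast_card_eq_zero K
    have h2 : ringChar K ∣ Q := by
      rw [← hQcard]
      exact (CharP.cast_eq_zero_iff K (ringChar K) _).1 h1
    have hrp : (ringChar K).Prime := CharP.char_is_prime K (ringChar K)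
    have h3 : ringChar K ∣ p := by
      rw [hQdef, ← pow_mul] at h2
      exact hrp.dvd_of_dvd_pow h2
    have h4 : ringChar K = p := (Nat.prime_dvd_prime_iff_eq hrp hp).1 h3
    rw [← h4]
    exact ringChar.charP K
  haveI hcharD : CharP (AlgebraicClosure K) p := charP_of_injective_algebraMap (algebraMap K (AlgebraicClosure K)).injective p
  haveI : ExpChar (AlgebraicClosure K) p := ExpChar.prime hp
  -- images of the entries
  set i : K →+* (AlgebraicClosure K) := algebraMap K (AlgebraicClosure K) with hi
  set a0 : (AlgebraicClosure K) := i (M 0 0) with ha0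
  set b0 : (AlgebraicClosure K) := i (M 0 1) with hb0
  set c0 : (AlgebraicClosure K) := i (M 1 0) with hc0
  set d0 : (AlgebraicClosure K) := i (M 1 1) with hd0
  have hfixK : ∀ u : K, i u ^ Q = i u := by
    intro u
    rw [← map_pow, ← hQcard, FiniteField.pow_card]
  -- Frobenius
  set F : AlgebraicClosure K →+* AlgebraicClosure K := iterateFrobenius (AlgebraicClosure K) p (t * n) with hF
  have hFapp : ∀ y : AlgebraicClosure K, F y = y ^ Q := by
    intro y
    rw [hF, iterateFrobenius_def, hQdef, ← pow_mul]
  -- the relation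
  have hrelβ : c0 * β ^ (Q + 1) + d0 * β ^ Q - a0 * β - b0 = 0 := by
    simpa [ha0, hb0, hc0, hd0, hi, map_add, map_sub, _root_.map_mul, aeval_C, aeval_X_pow, aeval_X] using hβ
  have hrelstep : ∀ x : AlgebraicClosure K,
      c0 * x ^ (Q + 1) + d0 * x ^ Q - a0 * x - b0 = 0 →
      c0 * (x ^ Q) ^ (Q + 1) + d0 * (x ^ Q) ^ Q - a0 * (x ^ Q) - b0 = 0 := by
    intro x hx
    have h0 := congrArg F hx
    rw [map_zero] at h0
    simp only [map_add, map_sub, _root_.map_mul, map_pow] at h0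
    simp only [hFapp] at h0
    rw [ha0, hb0, hc0, hd0] at h0 ⊢
    rw [hfixK, hfixK, hfixK, hfixK] at h0
    exact h0
  have hrelk : ∀ k : ℕ, c0 * (β ^ Q ^ k) ^ (Q + 1) + d0 * (β ^ Q ^ k) ^ Q
      - a0 * (β ^ Q ^ k) - b0 = 0 := by
    intro k
    induction k with
    | zero => simpa using hrelβ
    | succ k ih =>
      have hpow : (β ^ Q ^ k) ^ Q = β ^ Q ^ (k + 1) := by
        rw [← pow_mul, ← pow_succ]
      have := hrelstep _ ih
      rw [hpow] at this
      exact this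
  -- matrix over the closure
  set Mc : Matrix (Fin 2) (Fin 2) (AlgebraicClosure K) := M.map i with hMc
  have hMdet : IsUnit M.det := (Matrix.isUnit_iff_isUnit_det M).1 A.isUnit
  have hMcdet : IsUnit Mc.det := by
    have hdet : Mc.det = i M.det := (RingHom.map_det i M).symm
    rw [hdet]
    exact (isUnit_iff_ne_zero).2 (by
      simpa [hi] using (algebraMap K (AlgebraicClosure K)).injective.ne_iff.2 hMdet.ne_zero)
  have hvecne : ∀ w : Fin 2 → AlgebraicClosure K, w 1 = 1 → Mc *ᵥ w ≠ 0 := by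
    intro w hw h0
    have : w = 0 := by
      have h1 : Mc⁻¹ *ᵥ (Mc *ᵥ w) = w := by
        rw [Matrix.mulVec_mulVec, Matrix.nonsing_inv_mul Mc hMcdet, Matrix.one_mulVec]
      rw [h0, Matrix.mulVec_zero] at h1
      exact h1.symm
    rw [this] at hw
    exact one_ne_zero hw.symm
  have hMcEq : Mc = !![a0, b0; c0, d0] := by
    rw [hMc, Matrix.eta_fin_two (M.map i)]
    simp only [Matrix.map_apply, ← ha0, ← hb0, ← hc0, ← hd0]
  have hmul : ∀ x : AlgebraicClosure K,
      (!![a0, b0; c0, d0] : Matrix (Fin 2) (Fin 2) (AlgebraicClosure K)) *ᵥ ![x, 1]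
        = ![a0 * x + b0, c0 * x + d0] := by
    intro x
    funext j
    fin_cases j <;> simp [Matrix.mulVec, dotProduct, Fin.sum_univ_two]
  have hvec : ∀ x : AlgebraicClosure K,
      c0 * x ^ (Q + 1) + d0 * x ^ Q - a0 * x - b0 = 0 →
      Mc *ᵥ ![x, 1] = (c0 * x + d0) • ![x ^ Q, 1] ∧ c0 * x + d0 ≠ 0 := by
    intro x hx
    have hmv : Mc *ᵥ ![x, 1] = (c0 * x + d0) • ![x ^ Q, 1] := by
      rw [hMcEq, hmul, Matrix.smul_vec2, smul_eq_mul, smul_eq_mul]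
      refine Matrix.vec2_eq ?_ ?_
      · linear_combination -hx
      · ring
    refine ⟨hmv, fun h0 => ?_⟩
    apply hvecne ![x, 1] rfl
    rw [hmv, h0, zero_smul]
  -- iterate
  have hiter : ∀ k : ℕ, ∃ lam : AlgebraicClosure K, lam ≠ 0 ∧
      (Mc ^ k) *ᵥ ![β, 1] = lam • ![β ^ Q ^ k, 1] := by
    intro k
    induction k with
    | zero => exact ⟨1, one_ne_zero, by simp⟩
    | succ k ih =>
      obtain ⟨lam, hlam, hv⟩ := ih
      obtain ⟨hmv, hne⟩ := hvec _ (hrelk k)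
      refine ⟨lam * (c0 * β ^ Q ^ k + d0), mul_ne_zero hlam hne, ?_⟩
      have hpow : (β ^ Q ^ k) ^ Q = β ^ Q ^ (k + 1) := by
        rw [← pow_mul, ← pow_succ]
      rw [pow_succ', ← Matrix.mulVec_mulVec, hv, Matrix.mulVec_smul, hmv, hpow, smul_smul]
  -- A^n = 1
  have hAn : A ^ n = 1 := by rw [← hord]; exact pow_orderOf_eq_one A
  have hMn : M ^ n = 1 := by
    have := congrArg (Units.val) hAn
    rw [Units.val_pow_eq_pow_val, Units.val_one] at this
    exact this
  have hMcn : Mc ^ n = 1 := by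
    have : Mc = (RingHom.mapMatrix i) M := by rw [hMc]; rfl
    rw [this, ← map_pow, hMn]
    simp
  -- β is fixed by the n-th power of Frobenius
  have hfix : β ^ Q ^ n = β := by
    obtain ⟨lam, hlam, hv⟩ := hiter n
    rw [hMcn, Matrix.one_mulVec] at hv
    have h1 : (1 : AlgebraicClosure K) = lam * 1 := by
      have := congrFun hv 1
      simpa using this
    have h0 : β = lam * β ^ Q ^ n := by
      have := congrFun hv 0
      simpa using this
    rw [← mul_one lam] at h0
    rw [← h1, one_mul] at h0
    exact h0.symm
  -- β is integral over K
  have hint : IsIntegral K β := Algebra.IsIntegral.isIntegral β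
  -- the minimal polynomial degree is not 1
  have hd1 : (minpoly K β).natDegree ≠ 1 := by
    intro h1
    rw [minpoly.natDegree_eq_one_iff] at h1
    obtain ⟨x0, hx0⟩ := h1
    -- transfer the relation to K
    have hrβ := hrelβ
    rw [← hx0] at hrβ
    rw [show (algebraMap K (AlgebraicClosure K)) x0 = i x0 from rfl] at hrβ
    rw [pow_succ, hfixK x0] at hrβ
    have hK0 : M 1 0 * (x0 * x0) + M 1 1 * x0 - M 0 0 * x0 - M 0 1 = 0 := by
      apply i.injective
      rw [map_zero, map_sub, map_sub, map_add, _root_.map_mul, _root_.map_mul, _root_.map_mul,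
        _root_.map_mul]
      rw [ha0, hb0, hc0, hd0] at hrβ
      linear_combination hrβ
    -- eigenvector
    set μ : K := M 1 0 * x0 + M 1 1 with hμ
    set v : Fin 2 → K := ![x0, 1] with hv
    have hvne : v ≠ 0 := by
      intro h
      have := congrFun h 1
      simp [hv] at this
    have heigvec : M *ᵥ v = μ • v := by
      rw [Matrix.eta_fin_two M, hv]
      funext j
      fin_cases j
      · simp [Matrix.mulVec, dotProduct, Fin.sum_univ_two, hμ]
        linear_combination -hK0
      · simp [Matrix.mulVec, dotProduct, Fin.sum_univ_two, hμ]
    have heig : Module.End.HasEigenvector (Matrix.toLinAlgEquiv' M) μ v := by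
      refine ⟨Module.End.mem_eigenspace_iff.2 ?_, hvne⟩
      show Matrix.toLinAlgEquiv' M v = μ • v
      rw [Matrix.toLinAlgEquiv'_apply]
      exact heigvec
    have haev : Polynomial.aeval (Matrix.toLinAlgEquiv' M) (minpoly K M) = 0 := by
      have h6 := Polynomial.aeval_algHom_apply
        (Matrix.toLinAlgEquiv' (n := Fin 2) (R := K)).toAlgHom M (minpoly K M)
      simp only [AlgEquiv.coe_toAlgHom] at h6
      rw [h6, minpoly.aeval, map_zero]
    have hroot : (minpoly K M).eval μ = 0 := by
      have h2 := Module.End.aeval_apply_of_hasEigenvector heig (p := minpoly K M)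
      rw [haev] at h2
      have h3 := congrFun h2.symm 1
      simp [hv] at h3
      exact h3
    have hXdvd : X - C μ ∣ minpoly K M := dvd_iff_isRoot.2 hroot
    obtain ⟨r, hr⟩ := hXdvd
    rcases hirr.isUnit_or_isUnit hr with hu | hu
    · exact Polynomial.not_isUnit_X_sub_C μ hu
    · have h4 : (minpoly K M).natDegree = 1 := by
        rw [hr, Polynomial.natDegree_mul (Polynomial.X_sub_C_ne_zero μ) hu.ne_zero,
          Polynomial.natDegree_X_sub_C, Polynomial.natDegree_eq_zero_of_isUnit hu]
      rw [hdeg] at h4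
      exact (by omega : (2 : ℕ) ≠ 1) h4
  -- the minimal polynomial degree divides n
  have hddvd : (minpoly K β).natDegree ∣ n := by
    set L : IntermediateField K (AlgebraicClosure K) := IntermediateField.adjoin K {β} with hL
    haveI : FiniteDimensional K L := IntermediateField.adjoin.finiteDimensional hint
    haveI : Finite L := Module.finite_of_finite K
    letI : DecidableEq L := Classical.decEq L
    letI : Fintype L := Fintype.ofFinite L
    have hfr : Module.finrank K L = (minpoly K β).natDegree :=
      IntermediateField.adjoin.finrank hint
    have hcardL : Fintype.card L = Q ^ (minpoly K β).natDegree := by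
      rw [Module.card_eq_pow_finrank (K := K) (V := L), hQcard, hfr]
    -- the big Frobenius
    set G : AlgebraicClosure K →+* AlgebraicClosure K :=
      iterateFrobenius (AlgebraicClosure K) p (t * n * n) with hG
    have hGapp : ∀ y : AlgebraicClosure K, G y = y ^ Q ^ n := by
      intro y
      have he : ((p ^ t) ^ n) ^ n = p ^ (t * n * n) := by
        rw [← pow_mul, ← pow_mul, mul_assoc]
      rw [hG, iterateFrobenius_def, hQdef, he]
    -- the subfield fixed by G
    set S : Subfield (AlgebraicClosure K) := RingHom.eqLocusField G (RingHom.id _) with hS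
    have hKS : ∀ u : K, algebraMap K (AlgebraicClosure K) u ∈ S := by
      intro u
      show G (algebraMap K (AlgebraicClosure K) u) = algebraMap K (AlgebraicClosure K) u
      rw [hGapp, ← map_pow, ← hQcard, FiniteField.pow_card_pow]
    have hβS : β ∈ S := by
      show G β = β
      rw [hGapp]
      exact hfix
    set S' : IntermediateField K (AlgebraicClosure K) :=
      { S with algebraMap_mem' := hKS } with hS'
    have hLS : L ≤ S' := by
      rw [hL]
      exact IntermediateField.adjoin_le_iff.2 (Set.singleton_subset_iff.2 hβS)
    -- generator of Lˣ
    obtain ⟨g, hg⟩ := IsCyclic.exists_generator (α := Lˣ)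
    have hgord : orderOf g = Fintype.card L - 1 := by
      rw [orderOf_eq_card_of_forall_mem_zpowers hg, Nat.card_units, Nat.card_eq_fintype_card]
    have hgS : ((g : L) : AlgebraicClosure K) ^ Q ^ n = ((g : L) : AlgebraicClosure K) := by
      have hmem : ((g : L) : AlgebraicClosure K) ∈ S' := hLS (g : L).2
      have : G ((g : L) : AlgebraicClosure K) = ((g : L) : AlgebraicClosure K) := hmem
      rw [hGapp] at this
      exact this
    have hgne : ((g : L) : AlgebraicClosure K) ≠ 0 := by
      intro h
      have : (g : L) = 0 := by
        exact_mod_cast h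
      exact Units.ne_zero g this
    have hQn1 : 1 ≤ Q ^ n := Nat.one_le_pow _ _ (by omega)
    have hpow1 : ((g : L) : AlgebraicClosure K) ^ (Q ^ n - 1) = 1 := by
      have h5 : ((g : L) : AlgebraicClosure K) ^ (Q ^ n - 1) * ((g : L) : AlgebraicClosure K)
          = 1 * ((g : L) : AlgebraicClosure K) := by
        rw [← pow_succ, Nat.sub_add_cancel hQn1, hgS, one_mul]
      exact mul_right_cancel₀ hgne h5
    have hgpow : g ^ (Q ^ n - 1) = 1 := by
      apply Units.ext
      push_cast
      have : ((g : L) : AlgebraicClosure K) ^ (Q ^ n - 1) = ((1 : L) : AlgebraicClosure K) := by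
        rw [hpow1]; simp
      exact_mod_cast this
    have hord2 : orderOf g ∣ Q ^ n - 1 := orderOf_dvd_of_pow_eq_one hgpow
    rw [hgord, hcardL] at hord2
    exact aux_dvd_of_pow_sub_one_dvd hQ2 (minpoly.natDegree_pos hint) hord2
  -- conclude
  rcases (Nat.Prime.eq_one_or_self_of_dvd hn _ hddvd) with h | h
  · exact absurd h hd1
  · exact h
end

section
/- Let n and r be distinct prime numbers with r > 2, and let S = S(n, r). Then the number of affine sets A ∈ 𝔸 fixed under σ^n (i.e., with pointwise image σ^n(A) = A) is: 1 if r = p; 0 if r ≠ p and r does not divide q^n − 1; and r − 1 if r ≠ p and r divides q^n − 1. -/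
open Polynomial

/-- The affine sets `A(α)` for `α` of degree `r` over `K` that are fixed (as sets, pointwise
image) by the map `x ↦ x ^ m`. -/
def fixedAffineSets (K L : Type*) [Field K] [Field L] [Algebra K L] (r m : ℕ) :
    Set (Set L) :=
  {A | (∃ α : L, (minpoly K α).natDegree = r ∧ A = affineSet K α) ∧
    (fun x : L => x ^ m) '' A = A}

section Aux

variable {K L : Type*} [Field K] [Field L] [Algebra K L]

lemma cfas_charP (F : Type*) [Field F] [Fintype F] {p k : ℕ} (hp : p.Prime)
    (h : Fintype.card F = p ^ k) : CharP F p := by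
  have hk : k ≠ 0 := by
    rintro rfl
    simp only [pow_zero] at h
    exact absurd h (Fintype.one_lt_card.ne')
  have h0 : ((Fintype.card F : ℕ) : F) = 0 := Nat.cast_card_eq_zero F
  rw [h, Nat.cast_pow, pow_eq_zero_iff hk] at h0
  exact (CharP.charP_iff_prime_eq_zero hp).2 h0

lemma cfas_mem_affineSet_self (α : L) : α ∈ affineSet K α :=
  ⟨1, 0, one_ne_zero, by simp⟩

lemma cfas_affineSet_shift {c d : K} (hc : c ≠ 0) (α : L) :
    affineSet K (algebraMap K L c * α + algebraMap K L d) = affineSet K α := by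
  ext β
  constructor
  · rintro ⟨a, b, ha, rfl⟩
    exact ⟨a * c, a * d + b, mul_ne_zero ha hc, by simp only [map_mul, map_add]; ring⟩
  · rintro ⟨a, b, ha, rfl⟩
    obtain ⟨u, rfl⟩ : ∃ u, a = u * c := ⟨a / c, (div_mul_cancel₀ a hc).symm⟩
    refine ⟨u, b - u * d, left_ne_zero_of_mul ha, ?_⟩
    simp only [map_mul, map_sub]
    ring

lemma cfas_indep {α : L} (hα : α ∉ Set.range (algebraMap K L)) {u v : K}
    (h : algebraMap K L u * α = algebraMap K L v) : u = 0 ∧ v = 0 := by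
  have hu : u = 0 := by
    by_contra hu
    apply hα
    refine ⟨u⁻¹ * v, ?_⟩
    rw [map_mul, map_inv₀]
    rw [← h]
    field_simp [(map_ne_zero (algebraMap K L)).2 hu]
  refine ⟨hu, ?_⟩
  rw [hu, map_zero, zero_mul] at h
  exact (_root_.map_eq_zero (algebraMap K L)).1 h.symm

lemma cfas_iter {m : ℕ} (hadd : ∀ x y : L, (x + y) ^ m = x ^ m + y ^ m)
    (hfixK : ∀ c : K, algebraMap K L c ^ m = algebraMap K L c)
    {α : L} {a b : K}
    (h : α ^ m = algebraMap K L a * α + algebraMap K L b) (k : ℕ) :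
    α ^ m ^ k = algebraMap K L (a ^ k) * α
      + algebraMap K L (b * ∑ i ∈ Finset.range k, a ^ i) := by
  induction k with
  | zero => simp
  | succ k ih =>
    have h1 : α ^ m ^ (k + 1) = (α ^ m ^ k) ^ m := by rw [← pow_mul, pow_succ]
    rw [h1, ih, hadd, mul_pow, hfixK, hfixK, h, Finset.sum_range_succ]
    simp only [map_mul, map_add, map_pow]
    ring

lemma cfas_range_eq {m : ℕ} [Fintype K] [Fintype L] (hm : 1 < m)
    (hcK : Fintype.card K = m) (x : L) :
    x ^ m = x ↔ x ∈ Set.range (algebraMap K L) := by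
  classical
  have hfixK : ∀ c : K, algebraMap K L c ^ m = algebraMap K L c := by
    intro c
    rw [← map_pow, ← hcK, FiniteField.pow_card]
  constructor
  · intro hx
    have hsub : Set.range (algebraMap K L) ⊆ {y : L | y ^ m = y} := by
      rintro - ⟨c, rfl⟩
      exact hfixK c
    have hPne : (X ^ m - X : L[X]) ≠ 0 := FiniteField.X_pow_card_sub_X_ne_zero L hm
    have hS : {y : L | y ^ m = y} = ↑((X ^ m - X : L[X]).roots.toFinset) := by
      ext y
      simp only [Set.mem_setOf_eq, Finset.coe_sort_coe, Multiset.mem_toFinset,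
        Finset.mem_coe, mem_roots, hPne, ne_eq, not_false_eq_true, true_and, IsRoot.def,
        eval_sub, eval_pow, eval_X, sub_eq_zero]
    have hcard1 : {y : L | y ^ m = y}.ncard ≤ m := by
      rw [hS, Set.ncard_coe_finset]
      calc ((X ^ m - X : L[X]).roots.toFinset).card
          ≤ Multiset.card (X ^ m - X : L[X]).roots := Multiset.toFinset_card_le _
        _ ≤ (X ^ m - X : L[X]).natDegree := card_roots' _
        _ = m := FiniteField.X_pow_card_sub_X_natDegree_eq L hm
    have hcard2 : (Set.range (algebraMap K L)).ncard = m := by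
      rw [← Set.image_univ, Set.ncard_image_of_injective _ (algebraMap K L).injective,
        Set.ncard_univ, Nat.card_eq_fintype_card, hcK]
    have := Set.eq_of_subset_of_ncard_le hsub (by rw [hcard2]; exact hcard1) (Set.toFinite _)
    rw [this]
    exact hx
  · rintro ⟨c, rfl⟩
    exact hfixK c

lemma cfas_finrank {m r : ℕ} [Fintype K] [Fintype L] (hm : 1 < m)
    (hcK : Fintype.card K = m) (hcL : Fintype.card L = m ^ r) :
    Module.finrank K L = r := by
  have := Module.card_eq_pow_finrank (K := K) (V := L)
  rw [hcK, hcL] at this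
  exact (Nat.pow_right_injective hm this.symm)

lemma cfas_deg {m r : ℕ} [Fintype K] [Fintype L] (hm : 1 < m) (hrp : r.Prime)
    (hcK : Fintype.card K = m) (hcL : Fintype.card L = m ^ r) (α : L) :
    (minpoly K α).natDegree = r ↔ α ∉ Set.range (algebraMap K L) := by
  have hfr : Module.finrank K L = r := cfas_finrank hm hcK hcL
  have hmem : α ∈ Set.range (algebraMap K L) ↔ α ∈ (algebraMap K L).range := Iff.rfl
  constructor
  · intro hd hr
    rw [hmem] at hr
    have := minpoly.natDegree_eq_one_iff.2 hr
    rw [hd] at this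
    exact hrp.one_lt.ne' this
  · intro hα
    have hint : IsIntegral K α := IsIntegral.of_finite K α
    have hdvd : (minpoly K α).natDegree ∣ r := hfr ▸ minpoly.degree_dvd hint
    rcases (Nat.Prime.eq_one_or_self_of_dvd hrp _ hdvd) with h1 | h1
    · exact absurd (minpoly.natDegree_eq_one_iff.1 h1) (by rwa [← hmem])
    · exact h1

end Aux
section Aux2

variable {K L : Type*} [Field K] [Field L] [Algebra K L]

lemma cfas_pow_injective {m r : ℕ} (hr1 : 1 ≤ r) (hid : ∀ x : L, x ^ m ^ r = x) :
    Function.Injective (fun x : L => x ^ m) := by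
  intro x y hxy
  simp only at hxy
  have hx := hid x
  have hy := hid y
  have hrr : m ^ r = m * m ^ (r - 1) := by
    rw [← pow_succ', Nat.sub_add_cancel hr1]
  rw [hrr, pow_mul, hxy, ← pow_mul, ← hrr, hy] at hx
  exact hx.symm

lemma cfas_image_eq_iff [Fintype L] {m r : ℕ} (hr1 : 1 ≤ r)
    (hid : ∀ x : L, x ^ m ^ r = x)
    (hadd : ∀ x y : L, (x + y) ^ m = x ^ m + y ^ m)
    (hfixK : ∀ c : K, algebraMap K L c ^ m = algebraMap K L c) (α : L) :
    ((fun x : L => x ^ m) '' affineSet K α = affineSet K α) ↔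
      ∃ a b : K, a ≠ 0 ∧ α ^ m = algebraMap K L a * α + algebraMap K L b := by
  constructor
  · intro himg
    have : α ^ m ∈ affineSet K α := by
      rw [← himg]
      exact ⟨α, cfas_mem_affineSet_self α, rfl⟩
    obtain ⟨a, b, ha, hab⟩ := this
    exact ⟨a, b, ha, hab⟩
  · rintro ⟨a, b, ha, hab⟩
    have hsub : (fun x : L => x ^ m) '' affineSet K α ⊆ affineSet K α := by
      rintro - ⟨x, ⟨c, d, hc, rfl⟩, rfl⟩
      refine ⟨c * a, c * b + d, mul_ne_zero hc ha, ?_⟩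
      simp only [hadd, mul_pow, hfixK, hab, map_mul, map_add]
      ring
    have hcard : (affineSet K α).ncard ≤ ((fun x : L => x ^ m) '' affineSet K α).ncard := by
      rw [Set.ncard_image_of_injOn ((cfas_pow_injective hr1 hid).injOn)]
    exact Set.eq_of_subset_of_ncard_le hsub hcard (Set.toFinite _)

lemma cfas_mem_iff [Fintype K] [Fintype L] {m r : ℕ} (hm : 1 < m) (hrp : r.Prime)
    (hcK : Fintype.card K = m) (hcL : Fintype.card L = m ^ r)
    (hid : ∀ x : L, x ^ m ^ r = x)
    (hadd : ∀ x y : L, (x + y) ^ m = x ^ m + y ^ m)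
    (hfixK : ∀ c : K, algebraMap K L c ^ m = algebraMap K L c) (A : Set L) :
    A ∈ fixedAffineSets K L r m ↔
      ∃ (α : L) (a b : K), α ∉ Set.range (algebraMap K L) ∧ a ≠ 0 ∧
        α ^ m = algebraMap K L a * α + algebraMap K L b ∧ A = affineSet K α := by
  constructor
  · rintro ⟨⟨α, hdeg, rfl⟩, himg⟩
    have hα := (cfas_deg hm hrp hcK hcL α).1 hdeg
    obtain ⟨a, b, ha, hab⟩ := (cfas_image_eq_iff hrp.one_lt.le hid hadd hfixK α).1 himg
    exact ⟨α, a, b, hα, ha, hab, rfl⟩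
  · rintro ⟨α, a, b, hα, ha, hab, rfl⟩
    exact ⟨⟨α, (cfas_deg hm hrp hcK hcL α).2 hα, rfl⟩,
      (cfas_image_eq_iff hrp.one_lt.le hid hadd hfixK α).2 ⟨a, b, ha, hab⟩⟩

lemma cfas_constraint {m r : ℕ}
    (hid : ∀ x : L, x ^ m ^ r = x)
    (hadd : ∀ x y : L, (x + y) ^ m = x ^ m + y ^ m)
    (hfixK : ∀ c : K, algebraMap K L c ^ m = algebraMap K L c)
    {α : L} {a b : K} (hα : α ∉ Set.range (algebraMap K L))
    (hab : α ^ m = algebraMap K L a * α + algebraMap K L b) :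
    a ^ r = 1 ∧ b * ∑ i ∈ Finset.range r, a ^ i = 0 := by
  have := cfas_iter hadd hfixK hab r
  rw [hid] at this
  -- α = algebraMap (a ^ r) * α + algebraMap (b * Σ)
  have key : algebraMap K L (a ^ r - 1) * α = algebraMap K L (-(b * ∑ i ∈ Finset.range r, a ^ i)) := by
    simp only [map_sub, map_neg, map_one]
    linear_combination -this
  obtain ⟨h1, h2⟩ := cfas_indep hα key
  exact ⟨sub_eq_zero.1 h1, neg_eq_zero.1 h2⟩

end Aux2
section Aux3

variable {K L : Type*} [Field K] [Field L] [Algebra K L]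

lemma cfas_exists_not_range [Fintype K] [Fintype L] {m r : ℕ} (hm : 1 < m) (hr : 1 < r)
    (hcK : Fintype.card K = m) (hcL : Fintype.card L = m ^ r) :
    ∃ α : L, α ∉ Set.range (algebraMap K L) := by
  by_contra h
  push_neg at h
  have hsurj : Function.Surjective (algebraMap K L) := fun x => h x
  have h1 := Fintype.card_le_of_surjective _ hsurj
  rw [hcK, hcL] at h1
  have h2 : m ^ 1 < m ^ r := Nat.pow_lt_pow_right hm hr
  rw [pow_one] at h2
  omega

lemma cfas_exists_AS [Fintype K] [Fintype L] {p m : ℕ} (hp : p.Prime) (hm : 1 < m)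
    (hchar : CharP L p)
    (hcK : Fintype.card K = m) (hcL : Fintype.card L = m ^ p)
    (hrange : ∀ x : L, x ^ m = x ↔ x ∈ Set.range (algebraMap K L))
    (hadd : ∀ x y : L, (x + y) ^ m = x ^ m + y ^ m)
    (hfixK : ∀ c : K, algebraMap K L c ^ m = algebraMap K L c)
    (hid : ∀ x : L, x ^ m ^ p = x) :
    ∃ (α : L) (b : K), b ≠ 0 ∧ α ∉ Set.range (algebraMap K L) ∧
      α ^ m = α + algebraMap K L b := by
  classical
  haveI := Fact.mk hp
  haveI := hchar
  obtain ⟨α₁, hα₁⟩ := cfas_exists_not_range hm hp.one_lt hcK hcL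
  have hα₁0 : α₁ ≠ 0 := fun h => hα₁ ⟨0, by rw [map_zero, h]⟩
  let φL : Module.End K L :=
    { toFun := fun x => x ^ m
      map_add' := hadd
      map_smul' := fun c x => by
        simp only [RingHom.id_apply, Algebra.smul_def, mul_pow, hfixK] }
  have hφapp : ∀ x : L, φL x = x ^ m := fun _ => rfl
  have hpowφ : ∀ k (x : L), (φL ^ k) x = x ^ m ^ k := by
    intro k
    induction k with
    | zero => intro x; simp
    | succ k ih =>
      intro x
      rw [pow_succ', Module.End.mul_apply, hφapp, ih, ← pow_mul]
      congr 1
  have hφr : φL ^ p = 1 := by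
    apply LinearMap.ext
    intro x
    rw [hpowφ, hid x, Module.End.one_apply]
  haveI hcharEnd : CharP (Module.End K L) p := by
    constructor
    intro k
    rw [← CharP.cast_eq_zero_iff L p k]
    constructor
    · intro h
      have := LinearMap.ext_iff.1 h 1
      simpa [Module.End.natCast_apply, nsmul_eq_mul] using this
    · intro h
      apply LinearMap.ext
      intro x
      simp [Module.End.natCast_apply, nsmul_eq_mul, h]
  set e : Module.End K L := φL - 1 with hedef
  have he_apply : ∀ x : L, e x = x ^ m - x := fun x => by
    rw [hedef, LinearMap.sub_apply, hφapp, Module.End.one_apply]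
  have hep : e ^ p = 0 := by
    have h1 : φL = e + 1 := by rw [hedef, sub_add_cancel]
    have h2 : (e + 1 : Module.End K L) ^ p = e ^ p + 1 ^ p :=
      add_pow_char_of_commute (p := p) (x := e) (y := 1) (Commute.one_right e)
    rw [one_pow, ← h1, hφr] at h2
    exact (add_eq_right).1 h2.symm
  have he0 : e ≠ 0 := by
    intro h
    have : e α₁ = 0 := by rw [h]; rfl
    rw [he_apply, sub_eq_zero] at this
    exact hα₁ ((hrange α₁).1 this)
  have hPex : ∃ k, e ^ k = 0 := ⟨p, hep⟩
  obtain ⟨j, hj, hjmin⟩ : ∃ j, e ^ j = 0 ∧ ∀ i < j, e ^ i ≠ 0 :=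
    ⟨Nat.find hPex, Nat.find_spec hPex, fun i hi => Nat.find_min hPex hi⟩
  have hj2 : 2 ≤ j := by
    by_contra h
    push_neg at h
    interval_cases j
    · rw [pow_zero] at hj
      have h4 := LinearMap.ext_iff.1 hj α₁
      rw [Module.End.one_apply, LinearMap.zero_apply] at h4
      exact hα₁0 h4
    · rw [pow_one] at hj
      exact he0 hj
  have hs1 : e ^ (j - 1) ≠ 0 := hjmin (j - 1) (by omega)
  obtain ⟨y, hy⟩ : ∃ y : L, (e ^ (j - 1)) y ≠ 0 := by
    by_contra h
    push_neg at h
    exact hs1 (LinearMap.ext fun x => h x)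
  set w : L := (e ^ (j - 1)) y with hwdef
  set α : L := (e ^ (j - 2)) y with hαdef
  have hwα : e α = w := by
    rw [hαdef, hwdef, ← Module.End.mul_apply, ← pow_succ']
    congr 2
    omega
  have hw2 : e w = 0 := by
    rw [hwdef, ← Module.End.mul_apply, ← pow_succ']
    have h1 : j - 1 + 1 = j := by omega
    rw [h1, hj, LinearMap.zero_apply]
  have hwrange : w ∈ Set.range (algebraMap K L) := by
    apply (hrange w).1
    have h2 := hw2
    rw [he_apply, sub_eq_zero] at h2
    exact h2
  obtain ⟨b, hb⟩ := hwrange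
  have hb0 : b ≠ 0 := by
    rintro rfl
    rw [map_zero] at hb
    exact hy hb.symm
  refine ⟨α, b, hb0, ?_, ?_⟩
  · intro hmem
    have h1 : α ^ m = α := (hrange α).2 hmem
    have h2 : e α = 0 := by rw [he_apply, h1, sub_self]
    rw [hwα] at h2
    exact hy h2
  · have h3 := hwα
    rw [he_apply, ← hb] at h3
    linear_combination h3

lemma cfas_exists_eigen [Fintype K] [Fintype L] {m r : ℕ} (hm : 1 < m) (hr1 : 1 ≤ r)
    (hcL : Fintype.card L = m ^ r)
    (hrange : ∀ x : L, x ^ m = x ↔ x ∈ Set.range (algebraMap K L))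
    (hadd : ∀ x y : L, (x + y) ^ m = x ^ m + y ^ m)
    (hfixK : ∀ c : K, algebraMap K L c ^ m = algebraMap K L c)
    (hid : ∀ x : L, x ^ m ^ r = x)
    {a : K} (ha1 : a ≠ 1) (har : a ^ r = 1) :
    ∃ α : L, α ∉ Set.range (algebraMap K L) ∧ α ^ m = algebraMap K L a * α := by
  classical
  have ha0 : a ≠ 0 := by
    rintro rfl
    rw [zero_pow (by omega)] at har
    exact one_ne_zero har.symm
  set b := a⁻¹ with hbdef
  have hab : a * b = 1 := mul_inv_cancel₀ ha0
  set Q : L[X] := ∑ k ∈ Finset.range r, C (algebraMap K L (b ^ k)) * X ^ (m ^ k) with hQ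
  have hQcoeff : Q.coeff 1 = 1 := by
    rw [hQ, finset_sum_coeff]
    rw [Finset.sum_eq_single 0]
    · simp
    · intro k hk h0
      rw [coeff_C_mul, coeff_X_pow, if_neg, mul_zero]
      intro h
      have h5 : 1 < m ^ k := Nat.one_lt_pow h0 hm
      omega
    · intro h
      exact absurd (Finset.mem_range.2 (by omega)) h
  have hQ0 : Q ≠ 0 := fun h => by simp [h] at hQcoeff
  have hQdeg : Q.natDegree < Fintype.card L := by
    have h1 : Q.natDegree ≤ m ^ (r - 1) := by
      rw [hQ]
      apply Polynomial.natDegree_sum_le_of_forall_le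
      intro k hk
      refine le_trans (natDegree_C_mul_le _ _) ?_
      rw [natDegree_X_pow]
      exact Nat.pow_le_pow_right (by omega) (by
        have := Finset.mem_range.1 hk; omega)
    rw [hcL]
    exact lt_of_le_of_lt h1 (Nat.pow_lt_pow_right hm (by omega))
  obtain ⟨x, hx⟩ : ∃ x : L, Q.eval x ≠ 0 := by
    by_contra h
    push_neg at h
    exact hQ0 (Polynomial.eq_zero_of_natDegree_lt_card_of_eval_eq_zero Q
      Function.injective_id (fun i => h i) hQdeg)
  set α := Q.eval x with hα
  have hαval : α = ∑ k ∈ Finset.range r, algebraMap K L (b ^ k) * x ^ m ^ k := by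
    rw [hα, hQ, eval_finset_sum]
    simp
  let ψ : L →+ L :=
    { toFun := fun z => z ^ m
      map_zero' := zero_pow (by omega)
      map_add' := hadd }
  have hψ : ∀ z : L, ψ z = z ^ m := fun _ => rfl
  have hpow : α ^ m = ∑ k ∈ Finset.range r, algebraMap K L (b ^ k) * x ^ m ^ (k + 1) := by
    rw [← hψ, hαval, map_sum]
    refine Finset.sum_congr rfl fun k hk => ?_
    rw [hψ, mul_pow, hfixK, ← pow_mul, ← pow_succ]
  have hbr : b ^ (r - 1) = a := by
    have h1 : b ^ r = 1 := by
      rw [hbdef, inv_pow, har, inv_one]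
    have h2 : b ^ (r - 1) * b = 1 := by
      rw [← pow_succ]
      have : r - 1 + 1 = r := by omega
      rw [this]
      exact h1
    calc b ^ (r - 1) = b ^ (r - 1) * (b * a) := by rw [mul_comm b a, hab, mul_one]
      _ = (b ^ (r - 1) * b) * a := by ring
      _ = a := by rw [h2, one_mul]
  have key : α ^ m = algebraMap K L a * α := by
    rw [hpow, hαval, Finset.mul_sum]
    obtain ⟨r', hr'⟩ : ∃ r', r = r' + 1 := ⟨r - 1, by omega⟩
    have hbr' : b ^ r' = a := by rw [← hbr, hr']; norm_num
    have hidx : x ^ m ^ (r' + 1) = x := by rw [← hr']; exact hid x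
    subst hr'
    rw [Finset.sum_range_succ, Finset.sum_range_succ']
    congr 1
    · refine Finset.sum_congr rfl fun k hk => ?_
      rw [← mul_assoc, ← map_mul]
      congr 2
      rw [pow_succ', ← mul_assoc, hab, one_mul]
    · rw [hbr', hidx]
      simp
  have hαne : α ≠ 0 := hx
  refine ⟨α, ?_, key⟩
  intro hmem
  have h1 : α ^ m = α := (hrange α).2 hmem
  rw [key] at h1
  have h2 : algebraMap K L (a - 1) * α = 0 := by
    rw [map_sub, map_one, sub_mul, one_mul, h1, sub_self]
  rcases mul_eq_zero.1 h2 with h | h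
  · exact ha1 (sub_eq_zero.1 ((_root_.map_eq_zero (algebraMap K L)).1 h))
  · exact hαne h

end Aux3
section Aux4

variable {K L : Type*} [Field K] [Field L] [Algebra K L]

lemma cfas_root_trivial [Fintype K] {m r : ℕ} (hrp : r.Prime)
    (hcK : Fintype.card K = m) (hndvd : ¬ r ∣ m - 1) {a : K} (har : a ^ r = 1) :
    a = 1 := by
  classical
  have ha0 : a ≠ 0 := by
    rintro rfl
    rw [zero_pow hrp.ne_zero] at har
    exact one_ne_zero har.symm
  set u : Kˣ := Units.mk0 a ha0 with hu
  have hu1 : u ^ r = 1 := by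
    apply Units.ext
    simpa [hu] using har
  have hdvd : orderOf u ∣ r := orderOf_dvd_of_pow_eq_one hu1
  have hcard : orderOf u ∣ m - 1 := by
    have := orderOf_dvd_card (x := u)
    rwa [Fintype.card_units, hcK] at this
  rcases hrp.eq_one_or_self_of_dvd _ hdvd with h | h
  · have := orderOf_eq_one_iff.1 h
    have : (u : K) = 1 := by rw [this]; rfl
    simpa [hu] using this
  · rw [h] at hcard
    exact absurd hcard hndvd

lemma cfas_card_roots [Fintype K] {m r : ℕ} (hm : 1 < m) (hr : 1 < r)
    (hcK : Fintype.card K = m) (hdvd : r ∣ m - 1) :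
    ({a : K | a ^ r = 1 ∧ a ≠ 1}).ncard = r - 1 := by
  classical
  obtain ⟨g, hg⟩ := IsCyclic.exists_generator (α := Kˣ)
  have hcardU : Fintype.card Kˣ = m - 1 := by rw [Fintype.card_units, hcK]
  have hordg : orderOf g = m - 1 := by
    rw [orderOf_eq_card_of_forall_mem_zpowers hg, Nat.card_eq_fintype_card, hcardU]
  have hm1 : m - 1 ≠ 0 := by omega
  have hk0 : (m - 1) / r ≠ 0 := by
    have h1 : r ≤ m - 1 := Nat.le_of_dvd (by omega) hdvd
    have := Nat.div_pos h1 (by omega)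
    omega
  have hkdvd : (m - 1) / r ∣ m - 1 := Nat.div_dvd_of_dvd hdvd
  set ζ : Kˣ := g ^ ((m - 1) / r) with hζ
  have hordζ : orderOf ζ = r := by
    rw [hζ, orderOf_pow_of_dvd hk0 (hordg ▸ hkdvd), hordg, Nat.div_div_self hdvd hm1]
  have hprim : IsPrimitiveRoot ((ζ : Kˣ) : K) r := by
    rw [IsPrimitiveRoot.coe_units_iff]
    exact hordζ ▸ IsPrimitiveRoot.orderOf ζ
  have hone : (1 : K) ∈ Polynomial.nthRootsFinset r (1 : K) :=
    (Polynomial.mem_nthRootsFinset (by omega) (1 : K)).2 (one_pow r)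
  have hset : {a : K | a ^ r = 1 ∧ a ≠ 1} = ↑((Polynomial.nthRootsFinset r (1 : K)) \ {1}) := by
    ext a
    simp only [Set.mem_setOf_eq, Finset.coe_sdiff, Set.mem_diff, Finset.mem_coe,
      Polynomial.mem_nthRootsFinset (show 0 < r by omega), Finset.coe_singleton,
      Set.mem_singleton_iff]
  rw [hset, Set.ncard_coe_finset,
    Finset.card_sdiff_of_subset (Finset.singleton_subset_iff.2 hone),
    hprim.card_nthRootsFinset, Finset.card_singleton]

lemma cfas_eigen_same [Fintype K] [Fintype L] {m : ℕ} (hm : 1 < m)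
    (hrange : ∀ x : L, x ^ m = x ↔ x ∈ Set.range (algebraMap K L))
    {α β : L} {a : K} (hα : α ∉ Set.range (algebraMap K L))
    (hβ : β ∉ Set.range (algebraMap K L))
    (heα : α ^ m = algebraMap K L a * α) (heβ : β ^ m = algebraMap K L a * β) :
    affineSet K α = affineSet K β := by
  have hβ0 : β ≠ 0 := fun h => hβ ⟨0, by rw [map_zero, h]⟩
  have hα0 : α ≠ 0 := fun h => hα ⟨0, by rw [map_zero, h]⟩
  have ha0 : algebraMap K L a ≠ 0 := by
    intro h
    rw [h, zero_mul] at heα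
    exact hα0 (pow_eq_zero_iff (by omega) |>.1 heα)
  have hγ : (α * β⁻¹) ^ m = α * β⁻¹ := by
    rw [mul_pow, inv_pow, heα, heβ]
    field_simp
  obtain ⟨c, hc⟩ := (hrange _).1 hγ
  have hc0 : c ≠ 0 := by
    rintro rfl
    rw [map_zero] at hc
    exact (mul_ne_zero hα0 (inv_ne_zero hβ0)) hc.symm
  have hαc : α = algebraMap K L c * β := by
    rw [hc]
    field_simp
  have h2 : α = algebraMap K L c * β + algebraMap K L 0 := by
    rw [map_zero, add_zero]
    exact hαc
  rw [h2]
  exact cfas_affineSet_shift hc0 β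

lemma cfas_eigen_val {m : ℕ} {α β : L} {a a' : K}
    (hadd : ∀ x y : L, (x + y) ^ m = x ^ m + y ^ m)
    (hfixK : ∀ c : K, algebraMap K L c ^ m = algebraMap K L c)
    (hα : α ∉ Set.range (algebraMap K L))
    (heq : affineSet K α = affineSet K β)
    (heα : α ^ m = algebraMap K L a * α) (heβ : β ^ m = algebraMap K L a' * β) :
    a = a' := by
  have hβmem : β ∈ affineSet K α := heq ▸ cfas_mem_affineSet_self β
  obtain ⟨c, d, hc, hβc⟩ := hβmem
  have h3 := heβ
  rw [hβc, hadd, mul_pow, hfixK, hfixK, heα] at h3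
  have h2 : algebraMap K L (c * a - a' * c) * α = algebraMap K L (a' * d - d) := by
    simp only [map_mul, map_sub]
    linear_combination h3
  obtain ⟨h4, -⟩ := cfas_indep hα h2
  have h5 : c * a = a' * c := sub_eq_zero.1 h4
  exact mul_left_cancel₀ hc (by linear_combination h5)

end Aux4
/-- Let `n` and `r` be distinct primes with `r > 2` and `S = S(n, r)`.
The number of affine sets in `𝔸` fixed under `σ^n` (pointwise image), where `σ : x ↦ x ^ q`
with `q = p ^ t`, is: `1` if `r = p`; `0` if `r ≠ p` and `r ∤ q^n - 1`; and `r - 1` if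
`r ≠ p` and `r ∣ q^n - 1`. -/
theorem count_fixed_affineSets_sigma_pow_n_distinct_primes
    (p t n r : ℕ) (hp : p.Prime) (ht : 0 < t) (hn : n.Prime) (hr : r.Prime)
    (hnr : n ≠ r) (hr2 : 2 < r)
    (K L : Type*) [Field K] [Field L] [Algebra K L] [Fintype K] [Fintype L]
    (hK : Fintype.card K = (p ^ t) ^ n) (hL : Fintype.card L = (p ^ t) ^ (n * r)) :
    (r = p → (fixedAffineSets K L r ((p ^ t) ^ n)).ncard = 1) ∧
    (r ≠ p → ¬ r ∣ (p ^ t) ^ n - 1 → (fixedAffineSets K L r ((p ^ t) ^ n)).ncard = 0) ∧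
    (r ≠ p → r ∣ (p ^ t) ^ n - 1 →
      (fixedAffineSets K L r ((p ^ t) ^ n)).ncard = r - 1) := by
  classical
  haveI := Fact.mk hp
  set m := (p ^ t) ^ n with hmdef
  have hm : 1 < m := Nat.one_lt_pow hn.pos.ne' (Nat.one_lt_pow ht.ne' hp.one_lt)
  have hcK : Fintype.card K = m := hK
  have hmp : m = p ^ (t * n) := by rw [hmdef, pow_mul]
  have hcL : Fintype.card L = m ^ r := by rw [hL, pow_mul]
  have hcharL : CharP L p := cfas_charP L hp (by rw [hcL, hmp, ← pow_mul])
  have hcharK : CharP K p := cfas_charP K hp (by rw [hcK, hmp])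
  haveI := hcharL
  haveI := hcharK
  have hadd : ∀ x y : L, (x + y) ^ m = x ^ m + y ^ m := by
    intro x y
    rw [hmp]
    exact add_pow_char_pow (p := p) (n := t * n) (x := x) (y := y)
  have hfixK : ∀ c : K, algebraMap K L c ^ m = algebraMap K L c := by
    intro c
    rw [← map_pow, ← hcK, FiniteField.pow_card]
  have hid : ∀ x : L, x ^ m ^ r = x := by
    intro x
    rw [← hcL]
    exact FiniteField.pow_card x
  have hrange : ∀ x : L, x ^ m = x ↔ x ∈ Set.range (algebraMap K L) :=
    cfas_range_eq hm hcK
  have hmemiff := cfas_mem_iff (K := K) (L := L) hm hr hcK hcL hid hadd hfixK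
  have hsubL : ∀ x y : L, (x - y) ^ m = x ^ m - y ^ m := by
    intro x y
    have h1 := hadd (x - y) y
    rw [sub_add_cancel] at h1
    linear_combination -h1
  refine ⟨?_, ?_, ?_⟩
  · -- r = p
    intro hrp
    subst hrp
    obtain ⟨α₀, b₀, hb₀, hα₀, heq₀⟩ :=
      cfas_exists_AS hp hm hcharL hcK hcL hrange hadd hfixK hid
    have hset : fixedAffineSets K L r m = {affineSet K α₀} := by
      ext A
      rw [Set.mem_singleton_iff]
      constructor
      · intro hA
        obtain ⟨α, a, b, hα, ha, hab, rfl⟩ := (hmemiff A).1 hA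
        obtain ⟨har, hbs⟩ := cfas_constraint hid hadd hfixK hα hab
        have ha1 : a = 1 := by
          have h1 : (a - 1) ^ r = 0 := by
            rw [sub_pow_char a 1, har, one_pow, sub_self]
          exact sub_eq_zero.1 (pow_eq_zero_iff hr.ne_zero |>.1 h1)
        rw [ha1, map_one, one_mul] at hab
        have hb : b ≠ 0 := by
          rintro rfl
          rw [map_zero, add_zero] at hab
          exact hα ((hrange α).1 hab)
        set c := b / b₀ with hcdef
        have hc0 : c ≠ 0 := div_ne_zero hb hb₀
        have hcb : algebraMap K L c * algebraMap K L b₀ = algebraMap K L b := by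
          rw [← map_mul, hcdef, div_mul_cancel₀ b hb₀]
        have hγ : (α - algebraMap K L c * α₀) ^ m = α - algebraMap K L c * α₀ := by
          rw [hsubL, mul_pow, hfixK, heq₀, hab]
          linear_combination -hcb
        obtain ⟨d, hd⟩ := (hrange _).1 hγ
        have hα' : α = algebraMap K L c * α₀ + algebraMap K L d := by
          rw [hd]
          ring
        rw [hα', cfas_affineSet_shift hc0]
      · rintro rfl
        exact (hmemiff _).2 ⟨α₀, 1, b₀, hα₀, one_ne_zero,
          by rw [map_one, one_mul]; exact heq₀, rfl⟩
    rw [hset, Set.ncard_singleton]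
  · -- r ≠ p, ¬ r ∣ m - 1
    intro hrnep hndvd
    have hempty : fixedAffineSets K L r m = ∅ := by
      ext A
      simp only [Set.mem_empty_iff_false, iff_false]
      intro hA
      obtain ⟨α, a, b, hα, ha, hab, -⟩ := (hmemiff A).1 hA
      obtain ⟨har, hbs⟩ := cfas_constraint hid hadd hfixK hα hab
      have ha1 : a = 1 := cfas_root_trivial hr hcK hndvd har
      have hrK : (r : K) ≠ 0 := by
        intro h
        rcases hr.eq_one_or_self_of_dvd p ((CharP.cast_eq_zero_iff K p r).1 h) with h' | h'
        · exact hp.one_lt.ne' h'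
        · exact hrnep h'.symm
      have hb0 : b = 0 := by
        rw [ha1] at hbs
        simp only [one_pow, Finset.sum_const, Finset.card_range, nsmul_eq_mul, mul_one] at hbs
        rcases mul_eq_zero.1 hbs with h | h
        · exact h
        · exact absurd h hrK
      rw [ha1, hb0, map_one, one_mul, map_zero, add_zero] at hab
      exact hα ((hrange α).1 hab)
    rw [hempty, Set.ncard_empty]
  · -- r ≠ p, r ∣ m - 1
    intro hrnep hdvd
    have hrK : (r : K) ≠ 0 := by
      intro h
      rcases hr.eq_one_or_self_of_dvd p ((CharP.cast_eq_zero_iff K p r).1 h) with h' | h'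
      · exact hp.one_lt.ne' h'
      · exact hrnep h'.symm
    have hex : ∀ a : K, a ^ r = 1 → a ≠ 1 →
        ∃ α : L, α ∉ Set.range (algebraMap K L) ∧ α ^ m = algebraMap K L a * α :=
      fun a har ha1 => cfas_exists_eigen hm (by omega) hcL hrange hadd hfixK hid ha1 har
    choose! αf hf1 hf2 using hex
    set F : K → Set L := fun a => affineSet K (αf a) with hF
    set Ω : Set K := {a : K | a ^ r = 1 ∧ a ≠ 1} with hΩ
    have himg : fixedAffineSets K L r m = F '' Ω := by
      apply Set.eq_of_subset_of_subset
      · intro A hA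
        obtain ⟨α, a, b, hα, ha, hab, rfl⟩ := (hmemiff A).1 hA
        obtain ⟨har, hbs⟩ := cfas_constraint hid hadd hfixK hα hab
        have ha1 : a ≠ 1 := by
          rintro rfl
          simp only [one_pow, Finset.sum_const, Finset.card_range, nsmul_eq_mul,
            mul_one] at hbs
          have hb0 : b = 0 := by
            rcases mul_eq_zero.1 hbs with h | h
            · exact h
            · exact absurd h hrK
          rw [hb0, map_one, one_mul, map_zero, add_zero] at hab
          exact hα ((hrange α).1 hab)
        have hae : a - 1 ≠ 0 := sub_ne_zero.2 ha1
        set e := b / (a - 1) with hedef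
        have heqe : e * (a - 1) = b := div_mul_cancel₀ b hae
        set α' := α + algebraMap K L e with hα'def
        have hα'eq : α' ^ m = algebraMap K L a * α' := by
          rw [hα'def, hadd, hfixK, hab]
          have h6 : algebraMap K L (e * (a - 1)) = algebraMap K L b := by rw [heqe]
          rw [map_mul, map_sub, map_one] at h6
          linear_combination -h6
        have hα' : α' ∉ Set.range (algebraMap K L) := by
          rintro ⟨d, hd⟩
          apply hα
          refine ⟨d - e, ?_⟩
          rw [map_sub, hd, hα'def]
          ring
        have e1 : affineSet K α = affineSet K α' := by
          have h7 := cfas_affineSet_shift (K := K) (c := 1) (d := e) one_ne_zero α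
          rw [map_one, one_mul] at h7
          rw [hα'def]
          exact h7.symm
        have e2 : affineSet K (αf a) = affineSet K α' :=
          cfas_eigen_same hm hrange (hf1 a har ha1) hα' (hf2 a har ha1) hα'eq
        exact ⟨a, ⟨har, ha1⟩, by rw [hF]; simp only; rw [e2, ← e1]⟩
      · rintro A ⟨a, ⟨har, ha1⟩, rfl⟩
        have ha0 : a ≠ 0 := by
          rintro rfl
          rw [zero_pow hr.ne_zero] at har
          exact one_ne_zero har.symm
        exact (hmemiff _).2 ⟨αf a, a, 0, hf1 a har ha1, ha0,
          by rw [map_zero, add_zero]; exact hf2 a har ha1, rfl⟩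
    have hinj : Set.InjOn F Ω := by
      rintro a1 ⟨h1r, h11⟩ a2 ⟨h2r, h21⟩ hFa
      exact cfas_eigen_val hadd hfixK (hf1 a1 h1r h11) hFa
        (hf2 a1 h1r h11) (hf2 a2 h2r h21)
    rw [himg, Set.ncard_image_of_injOn hinj, hΩ]
    exact cfas_card_roots hm hr.one_lt hcK hdvd
end

section
/- Let n and r be distinct prime numbers with r > 2, and let S = S(n, r). Then the number of affine sets A ∈ 𝔸 fixed under σ^r (i.e., with pointwise image σ^r(A) = A) is (q^{r−1} − 1)/(q − 1). -/
open Polynomial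

open Finset

private lemma geom_mul (q n : ℕ) (hq : 1 ≤ q) :
    (q - 1) * ∑ i ∈ range n, q ^ i = q ^ n - 1 := by
  induction n with
  | zero => simp
  | succ n ih =>
    rw [sum_range_succ, Nat.mul_add, ih]
    have h1 : 1 ≤ q ^ n := Nat.one_le_pow _ _ hq
    have h3 : (q - 1) * q ^ n = q * q ^ n - q ^ n := by
      rw [Nat.sub_mul, one_mul]
    have h5 : q ^ (n + 1) = q * q ^ n := by rw [pow_succ, mul_comm]
    have h4 : q ^ n ≤ q * q ^ n := Nat.le_mul_of_pos_left _ (by omega)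
    omega

private lemma sum_mod_bij {M : Type*} [AddCommMonoid M] (g : ℕ → M) {n r : ℕ}
    (hn : 1 < n) (h : Nat.Coprime r n) :
    ∑ i ∈ range n, g (r * i % n) = ∑ j ∈ range n, g j := by
  obtain ⟨r', -, hr'⟩ := Nat.exists_mul_mod_eq_one_of_coprime h hn
  have hn0 : 0 < n := by omega
  have hrr : r * r' ≡ 1 [MOD n] := by
    unfold Nat.ModEq
    rw [hr', Nat.mod_eq_of_lt hn]
  refine Finset.sum_nbij' (fun i => r * i % n) (fun j => r' * j % n) ?_ ?_ ?_ ?_ ?_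
  · intro a _; exact mem_range.mpr (Nat.mod_lt _ hn0)
  · intro a _; exact mem_range.mpr (Nat.mod_lt _ hn0)
  · intro a ha
    have h1 : r' * (r * a % n) ≡ 1 * a [MOD n] := by
      calc r' * (r * a % n) ≡ r' * (r * a) [MOD n] := (Nat.mod_modEq (r*a) n).mul_left r'
        _ = (r * r') * a := by ring
        _ ≡ 1 * a [MOD n] := hrr.mul_right a
    have := h1
    unfold Nat.ModEq at this
    simpa [Nat.mod_eq_of_lt (mem_range.mp ha)] using this
  · intro a ha
    have h1 : r * (r' * a % n) ≡ 1 * a [MOD n] := by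
      calc r * (r' * a % n) ≡ r * (r' * a) [MOD n] := (Nat.mod_modEq (r'*a) n).mul_left r
        _ = (r * r') * a := by ring
        _ ≡ 1 * a [MOD n] := hrr.mul_right a
    have := h1
    unfold Nat.ModEq at this
    simpa [Nat.mod_eq_of_lt (mem_range.mp ha)] using this
  · intro a _; rfl

private lemma exists_sum_shift (q n r : ℕ) (hq : 1 ≤ q) (hn : 1 < n) (hr : 1 ≤ r)
    (h : Nat.Coprime r n) :
    ∃ m, ∑ i ∈ range n, q ^ (r * i) = (∑ i ∈ range n, q ^ i) + (q ^ n - 1) * m := by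
  have hqn : 1 ≤ q ^ n := Nat.one_le_pow _ _ hq
  have hmod : ∀ i, q ^ (r * i) ≡ q ^ (r * i % n) [MOD q ^ n - 1] := by
    intro i
    conv_lhs => rw [← Nat.div_add_mod (r * i) n]
    rw [pow_add, pow_mul]
    have h1 : q ^ n ≡ 1 [MOD q ^ n - 1] := ((Nat.modEq_iff_dvd' hqn).mpr dvd_rfl).symm
    calc (q^n) ^ (r*i/n) * q ^ (r*i%n)
        ≡ 1 ^ (r*i/n) * q ^ (r*i%n) [MOD q^n-1] := (h1.pow _).mul_right _
      _ = q ^ (r*i%n) := by rw [one_pow, one_mul]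
  have hsum : (∑ i ∈ range n, q ^ (r*i)) ≡ (∑ i ∈ range n, q ^ (r*i%n)) [MOD q^n-1] := by
    unfold Nat.ModEq
    rw [Finset.sum_nat_mod (range n) (q^n-1) (fun i => q ^ (r*i)), Finset.sum_nat_mod (range n) (q^n-1) (fun i => q ^ (r*i%n))]
    congr 1
    exact Finset.sum_congr rfl fun i _ => hmod i
  have hbij : (∑ i ∈ range n, q ^ (r*i%n)) = ∑ j ∈ range n, q ^ j :=
    sum_mod_bij (fun j => q ^ j) hn h
  rw [hbij] at hsum
  have hle : (∑ i ∈ range n, q ^ i) ≤ ∑ i ∈ range n, q ^ (r*i) :=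
    Finset.sum_le_sum fun i _ => Nat.pow_le_pow_right hq (Nat.le_mul_of_pos_left _ hr)
  obtain ⟨m, hm⟩ := (Nat.modEq_iff_dvd' hle).mp hsum.symm
  exact ⟨m, by omega⟩

private lemma pow_p_pow_injective {F : Type*} [Field F] {p : ℕ} (hp : p.Prime) [CharP F p]
    (k : ℕ) : Function.Injective fun x : F => x ^ p ^ k := by
  haveI := Fact.mk hp
  intro x y hxy
  have h : (x - y) ^ p ^ k = x ^ p ^ k - y ^ p ^ k := sub_pow_char_pow x y k
  simp only at hxy
  rw [hxy, sub_self] at h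
  have h2 := (pow_eq_zero_iff (pow_ne_zero k hp.ne_zero)).mp h
  exact sub_eq_zero.mp h2

private lemma powPowComp {F : Type*} [Monoid F] (q : ℕ) (x : F) (u v : ℕ) :
    x ^ q ^ (u + v) = (x ^ q ^ u) ^ q ^ v := by
  rw [pow_add, pow_mul]

private lemma pow_fix_mul {F : Type*} [Monoid F] {q : ℕ} {x : F} {a : ℕ}
    (hx : x ^ q ^ a = x) : ∀ k, x ^ q ^ (a * k) = x := by
  intro k
  induction k with
  | zero => simp
  | succ k ih =>
    have : a * (k + 1) = a * k + a := by ring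
    rw [this, powPowComp, ih, hx]

private lemma pow_fix_iter {F : Type*} [Monoid F] {q : ℕ} {x : F}
    (hx : x ^ q ^ 1 = x) : ∀ m, x ^ q ^ m = x := by
  intro m
  have := pow_fix_mul hx m
  simpa using this

private lemma pow_fix_gcd {F : Type*} [Field F] {p t : ℕ} (hp : p.Prime) [CharP F p]
    {q : ℕ} (hq : q = p ^ t) {x : F} :
    ∀ a b, x ^ q ^ a = x → x ^ q ^ b = x → x ^ q ^ Nat.gcd a b = x := by
  intro a b
  induction a, b using Nat.gcd.induction with
  | H0 b => intro _ h; simpa using h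
  | H1 m b hm ih =>
    intro hxm hxb
    rw [Nat.gcd_rec]
    apply ih _ hxm
    -- show x ^ q ^ (b % m) = x
    have hmul : x ^ q ^ (m * (b / m)) = x := pow_fix_mul hxm _
    have hM : q ^ (m * (b / m)) = p ^ (t * (m * (b / m))) := by
      rw [hq, ← pow_mul]
    have h1 : (x ^ q ^ (b % m)) ^ q ^ (m * (b / m)) = x := by
      rw [← powPowComp, add_comm, Nat.div_add_mod, hxb]
    have h2 : (x ^ q ^ (b % m)) ^ q ^ (m * (b / m)) = x ^ q ^ (m * (b / m)) := by
      rw [h1, hmul]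
    have := pow_p_pow_injective hp (t * (m * (b / m))) (F := F)
    rw [hM] at h2
    exact this h2

private lemma card_image_mul_eq {α β : Type*} [DecidableEq β] (s : Finset α) (f : α → β) (k : ℕ)
    (hf : ∀ a ∈ s, (s.filter fun x => f x = f a).card = k) :
    (s.image f).card * k = s.card := by
  calc (s.image f).card * k = ∑ _b ∈ s.image f, k := by rw [sum_const, smul_eq_mul]
    _ = ∑ b ∈ s.image f, (s.filter fun a => f a = b).card := by
        refine sum_congr rfl fun b hb => ?_
        obtain ⟨a, ha, rfl⟩ := Finset.mem_image.mp hb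
        exact (hf a ha).symm
    _ = s.card := (Finset.card_eq_sum_card_image f s).symm

private lemma card_root_set_le {F : Type*} [Field F] [Fintype F] [DecidableEq F]
    (P : Polynomial F) (hP : P ≠ 0) :
    (Finset.univ.filter fun x : F => Polynomial.eval x P = 0).card ≤ P.natDegree := by
  have hsub : (Finset.univ.filter fun x : F => Polynomial.eval x P = 0) ⊆ P.roots.toFinset := by
    intro x hx
    rw [Multiset.mem_toFinset, Polynomial.mem_roots hP]
    exact (Finset.mem_filter.mp hx).2
  calc _ ≤ P.roots.toFinset.card := Finset.card_le_card hsub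
    _ ≤ Multiset.card P.roots := Multiset.toFinset_card_le _
    _ ≤ P.natDegree := Polynomial.card_roots' P

private lemma card_pow_fix {F : Type*} [Field F] [Fintype F] [DecidableEq F] (m : ℕ)
    (hm : 2 ≤ m) (hdvd : (m - 1) ∣ Fintype.card F - 1) :
    (Finset.univ.filter fun x : F => x ^ m = x).card = m := by
  have hupper : (Finset.univ.filter fun x : F => x ^ m = x).card ≤ m := by
    have hP : (X ^ m - X : Polynomial F) ≠ 0 := by
      have h1 : (X ^ m - X : Polynomial F).coeff m = 1 := by
        rw [Polynomial.coeff_sub, Polynomial.coeff_X_pow, if_pos rfl,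
          Polynomial.coeff_X_of_ne_one (by omega : m ≠ 1), sub_zero]
      intro h
      rw [h, Polynomial.coeff_zero] at h1
      norm_num at h1
    have hdeg : (X ^ m - X : Polynomial F).natDegree ≤ m := by
      refine le_trans (Polynomial.natDegree_sub_le _ _) ?_
      simp [Polynomial.natDegree_X_pow, Polynomial.natDegree_X]
      omega
    refine le_trans ?_ (le_trans (card_root_set_le _ hP) hdeg)
    apply Finset.card_le_card
    intro x hx
    simp only [Finset.mem_filter, Finset.mem_univ, true_and] at hx ⊢
    simp [hx, sub_eq_zero]
  have hlower : m ≤ (Finset.univ.filter fun x : F => x ^ m = x).card := by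
    obtain ⟨γ, hγ⟩ := IsCyclic.exists_generator (α := Fˣ)
    have hcardu : Fintype.card Fˣ = Fintype.card F - 1 := Fintype.card_units (α := F)
    have hord : orderOf γ = Fintype.card F - 1 := by
      rw [orderOf_eq_card_of_forall_mem_zpowers hγ, Nat.card_eq_fintype_card, hcardu]
    have hF2 : 2 ≤ Fintype.card F := Fintype.one_lt_card
    obtain ⟨k, hk⟩ := hdvd
    have hk0 : 0 < k := by
      rcases Nat.eq_zero_or_pos k with h | h
      · exfalso; rw [h, Nat.mul_zero] at hk; omega
      · exact h
    set u := γ ^ k with hu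
    have hordu : orderOf u = m - 1 := by
      rw [hu, orderOf_pow, hord, hk]
      have hg : Nat.gcd ((m - 1) * k) k = k := Nat.gcd_eq_right (dvd_mul_left k (m - 1))
      rw [hg, Nat.mul_div_cancel _ hk0]
    have hpow1 : u ^ (m - 1) = 1 := by rw [← hordu]; exact pow_orderOf_eq_one u
    set s : Finset F :=
      insert (0 : F) ((range (m - 1)).image fun j => ((u ^ j : Fˣ) : F)) with hs
    have hsub : s ⊆ Finset.univ.filter fun x : F => x ^ m = x := by
      intro x hx
      simp only [Finset.mem_filter, Finset.mem_univ, true_and]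
      rw [hs, Finset.mem_insert] at hx
      rcases hx with rfl | hx
      · rw [zero_pow (by omega : m ≠ 0)]
      · obtain ⟨j, _, rfl⟩ := Finset.mem_image.mp hx
        have h1 : ((u ^ j : Fˣ) : F) ^ (m - 1) = 1 := by
          rw [← Units.val_pow_eq_pow_val, ← pow_mul, mul_comm, pow_mul, hpow1, one_pow,
            Units.val_one]
        have hm' : m = (m - 1) + 1 := by omega
        rw [hm', pow_succ, h1, one_mul]
    have hcards : s.card = m := by
      rw [hs, Finset.card_insert_of_notMem, Finset.card_image_of_injOn]
      · have : (range (m - 1)).card = m - 1 := Finset.card_range _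
        rw [this]; omega
      · intro i hi j hj hij
        have hij' : u ^ i = u ^ j := Units.ext hij
        have hiu : i ∈ Set.Iio (orderOf u) := by
          rw [hordu]; exact Finset.mem_range.mp (Finset.mem_coe.mp hi)
        have hju : j ∈ Set.Iio (orderOf u) := by
          rw [hordu]; exact Finset.mem_range.mp (Finset.mem_coe.mp hj)
        exact pow_injOn_Iio_orderOf hiu hju hij'
      · intro h
        obtain ⟨j, _, hj⟩ := Finset.mem_image.mp h
        exact Units.ne_zero _ hj
    calc m = s.card := hcards.symm
      _ ≤ _ := Finset.card_le_card hsub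
  omega


private lemma card_trace_zero_le {F : Type*} [Field F] [Fintype F] [DecidableEq F]
    (q n : ℕ) (hq : 2 ≤ q) (hn : 1 ≤ n) :
    (Finset.univ.filter fun x : F => ∑ j ∈ range n, x ^ q ^ j = 0).card ≤ q ^ (n - 1) := by
  set P : Polynomial F := ∑ j ∈ range n, X ^ q ^ j with hPdef
  have hdeg : P.natDegree ≤ q ^ (n - 1) := by
    refine Polynomial.natDegree_sum_le_of_forall_le _ _ fun j hj => ?_
    rw [Polynomial.natDegree_X_pow]
    exact Nat.pow_le_pow_right (by omega) (by
      have := Finset.mem_range.mp hj; omega)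
  have hcoeff : P.coeff (q ^ (n - 1)) = 1 := by
    rw [hPdef, Polynomial.finset_sum_coeff]
    have : ∀ j ∈ range n, (X ^ q ^ j : Polynomial F).coeff (q ^ (n - 1)) =
        if j = n - 1 then 1 else 0 := by
      intro j hj
      rw [Polynomial.coeff_X_pow]
      by_cases h : j = n - 1
      · rw [if_pos h, if_pos (by rw [h])]
      · rw [if_neg h, if_neg]
        intro hc
        exact h (Nat.pow_right_injective hq hc.symm)
    rw [Finset.sum_congr rfl this, Finset.sum_ite_eq' (range n) (n - 1) (fun _ => (1 : F))]
    rw [if_pos (Finset.mem_range.mpr (by omega))]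
  have hP : P ≠ 0 := by
    intro h
    rw [h, Polynomial.coeff_zero] at hcoeff
    norm_num at hcoeff
  have heval : ∀ x : F, Polynomial.eval x P = ∑ j ∈ range n, x ^ q ^ j := by
    intro x
    rw [hPdef, Polynomial.eval_finset_sum]
    simp
  have := card_root_set_le P hP
  refine le_trans (le_of_eq ?_) (le_trans this hdeg)
  congr 1
  ext x
  simp [heval]

private lemma sum_pow_dist {F : Type*} [CommRing F] (g : ℕ → F) (s : Finset ℕ) (e : ℕ)
    (h : ∀ x y : F, (x + y) ^ e = x ^ e + y ^ e) (h0 : (0 : F) ^ e = 0) :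
    (∑ i ∈ s, g i) ^ e = ∑ i ∈ s, (g i) ^ e := by
  induction s using Finset.cons_induction with
  | empty => simpa
  | cons a s ha ih => rw [Finset.sum_cons, Finset.sum_cons, h, ih]

/-- Let `n` and `r` be distinct primes with `r > 2` and `S = S(n, r)`.
The number of affine sets in `𝔸` fixed under `σ^r` (pointwise image), where `σ : x ↦ x ^ q`
with `q = p ^ t`, is `(q^{r-1} - 1)/(q - 1)`. -/
theorem count_fixed_affineSets_sigma_pow_r_distinct_primes
    (p t n r : ℕ) (hp : p.Prime) (ht : 0 < t) (hn : n.Prime) (hr : r.Prime)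
    (hnr : n ≠ r) (hr2 : 2 < r)
    (K L : Type*) [Field K] [Field L] [Algebra K L] [Fintype K] [Fintype L]
    (hK : Fintype.card K = (p ^ t) ^ n) (hL : Fintype.card L = (p ^ t) ^ (n * r)) :
    (fixedAffineSets K L r ((p ^ t) ^ r)).ncard =
      ((p ^ t) ^ (r - 1) - 1) / (p ^ t - 1) := by
  classical
  haveI hfactp := Fact.mk hp
  have hq2 : 2 ≤ p ^ t := Nat.one_lt_pow (by omega) hp.one_lt
  set q : ℕ := p ^ t with hqdef
  have hn2 : 2 ≤ n := hn.two_le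
  have hr1 : 1 ≤ r := by omega
  have hn0 : 0 < n := by omega
  have hcop : Nat.Coprime r n := (Nat.coprime_primes hr hn).mpr (fun h => hnr h.symm)
  -- characteristic of L and K
  have hcharL : CharP L p := by
    obtain ⟨p', hp'⟩ := CharP.exists L
    haveI := hp'
    obtain ⟨k, hk', hkcard⟩ := FiniteField.card L p'
    have hdd : p' ∣ q ^ (n * r) := by
      rw [← hL, hkcard]
      exact dvd_pow_self p' (by positivity)
    rw [hqdef, ← pow_mul] at hdd
    have : p' = p := (Nat.prime_dvd_prime_iff_eq hk' hp).mp (hk'.dvd_of_dvd_pow hdd)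
    rwa [this] at hp'
  have hcharK : CharP K p := by
    obtain ⟨p', hp'⟩ := CharP.exists K
    haveI := hp'
    obtain ⟨k, hk', hkcard⟩ := FiniteField.card K p'
    have hdd : p' ∣ q ^ n := by
      rw [← hK, hkcard]
      exact dvd_pow_self p' (by positivity)
    rw [hqdef, ← pow_mul] at hdd
    have : p' = p := (Nat.prime_dvd_prime_iff_eq hk' hp).mp (hk'.dvd_of_dvd_pow hdd)
    rwa [this] at hp'
  haveI := hcharL
  haveI := hcharK
  -- basic power facts
  have hcardLpow : ∀ x : L, x ^ q ^ (n * r) = x := by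
    intro x
    have := FiniteField.pow_card x
    rwa [hL] at this
  have hcardKpow : ∀ x : K, x ^ q ^ n = x := by
    intro x
    have := FiniteField.pow_card x
    rwa [hK] at this
  have hqm : ∀ m : ℕ, q ^ m = p ^ (t * m) := by
    intro m; rw [hqdef, ← pow_mul]
  have haddL : ∀ (m : ℕ) (x y : L), (x + y) ^ q ^ m = x ^ q ^ m + y ^ q ^ m := by
    intro m x y; rw [hqm m]; exact add_pow_char_pow x y p (t * m)
  have hsubL : ∀ (m : ℕ) (x y : L), (x - y) ^ q ^ m = x ^ q ^ m - y ^ q ^ m := by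
    intro m x y; rw [hqm m]; exact sub_pow_char_pow x y (t * m)
  have haddK : ∀ (m : ℕ) (x y : K), (x + y) ^ q ^ m = x ^ q ^ m + y ^ q ^ m := by
    intro m x y; rw [hqm m]; exact add_pow_char_pow x y p (t * m)
  have hsubK : ∀ (m : ℕ) (x y : K), (x - y) ^ q ^ m = x ^ q ^ m - y ^ q ^ m := by
    intro m x y; rw [hqm m]; exact sub_pow_char_pow x y (t * m)
  have hinjK : ∀ m : ℕ, Function.Injective (fun x : K => x ^ q ^ m) := by
    intro m
    have := pow_p_pow_injective (F := K) hp (t * m)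
    simpa [hqm m] using this
  have hsurjK : ∀ m : ℕ, Function.Surjective (fun x : K => x ^ q ^ m) := by
    intro m
    exact Finite.surjective_of_injective (hinjK m)
  -- gcd lemmas
  have hgcdL : ∀ x : L, x ^ q ^ r = x → x ^ q ^ n = x → x ^ q = x := by
    intro x h1 h2
    have := pow_fix_gcd hp hqdef r n h1 h2
    rwa [hcop, pow_one] at this
  have hgcdK : ∀ x : K, x ^ q ^ r = x → x ^ q = x := by
    intro x h1
    have := pow_fix_gcd hp hqdef r n h1 (hcardKpow x)
    rwa [hcop, pow_one] at this
  have hiterL : ∀ (x : L), x ^ q = x → ∀ m, x ^ q ^ m = x := by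
    intro x hx m
    exact pow_fix_iter (by rwa [pow_one]) m
  have hiterK : ∀ (x : K), x ^ q = x → ∀ m, x ^ q ^ m = x := by
    intro x hx m
    exact pow_fix_iter (by rwa [pow_one]) m
  -- the algebra map
  set f : K →+* L := (algebraMap K L : K →+* L) with hfdef
  have hfinj : Function.Injective f := f.injective
  -- the fixed-point finsets
  set SL : ℕ → Finset L := fun m => Finset.univ.filter fun x => x ^ q ^ m = x with hSLdef
  have hSLcard : ∀ m, 0 < m → m ∣ n * r → (SL m).card = q ^ m := by
    intro m hm hdvd
    have h2m : 2 ≤ q ^ m := Nat.one_lt_pow (by omega) (by omega)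
    apply card_pow_fix (q ^ m) h2m
    obtain ⟨k, hk⟩ := hdvd
    rw [hL, hk, pow_mul]
    have := Nat.sub_dvd_pow_sub_pow (q ^ m) 1 k
    simpa using this
  have hrange : Finset.univ.image f = SL n := by
    apply Finset.eq_of_subset_of_card_le
    · intro x hx
      obtain ⟨a, _, rfl⟩ := Finset.mem_image.mp hx
      simp only [hSLdef, Finset.mem_filter, Finset.mem_univ, true_and]
      rw [← map_pow, hcardKpow]
    · rw [hSLcard n hn0 (Dvd.intro r rfl), Finset.card_image_of_injective _ hfinj,
        Finset.card_univ, hK]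
  have hmem_range_iff : ∀ x : L, (x ^ q ^ n = x ↔ x ∈ Set.range f) := by
    intro x
    constructor
    · intro hx
      have : x ∈ SL n := by
        simp only [hSLdef, Finset.mem_filter, Finset.mem_univ, true_and]; exact hx
      rw [← hrange] at this
      obtain ⟨a, _, ha⟩ := Finset.mem_image.mp this
      exact ⟨a, ha⟩
    · rintro ⟨a, rfl⟩
      rw [← map_pow, hcardKpow]
  -- finrank and minpoly
  have hfr : Module.finrank K L = r := by
    have hc := Module.card_eq_pow_finrank (K := K) (V := L)
    rw [hK, hL, ← pow_mul q n (Module.finrank K L)] at hc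
    have h2 := Nat.pow_right_injective hq2 hc
    exact Nat.eq_of_mul_eq_mul_left hn0 h2.symm
  have hminpoly : ∀ x : L, ((minpoly K x).natDegree = r ↔ x ∉ Set.range f) := by
    intro x
    have hint : IsIntegral K x := IsIntegral.of_finite K x
    constructor
    · intro hdeg hmem
      obtain ⟨a, ha⟩ := hmem
      have h1 : (minpoly K x).natDegree = 1 :=
        minpoly.natDegree_eq_one_iff.mpr ⟨a, ha⟩
      omega
    · intro hmem
      have hdvd := minpoly.degree_dvd hint
      rw [hfr] at hdvd
      rcases hr.eq_one_or_self_of_dvd _ hdvd with h1 | h1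
      · exfalso
        obtain ⟨a, ha⟩ := minpoly.natDegree_eq_one_iff.mp h1
        exact hmem ⟨a, ha⟩
      · exact h1
  -- uniqueness of affine representation
  have huniq : ∀ x : L, x ∉ Set.range f → ∀ a b a' b' : K,
      f a * x + f b = f a' * x + f b' → a = a' ∧ b = b' := by
    intro x hx a b a' b' h
    by_cases haa : a = a'
    · subst haa
      exact ⟨rfl, hfinj (add_left_cancel h)⟩
    · exfalso
      have hne : f a - f a' ≠ 0 := by
        rw [sub_ne_zero]
        exact fun hc => haa (hfinj hc)
      have hx0 : x * (f a - f a') = f b' - f b := by linear_combination h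
      have hx' : x = (f b' - f b) / (f a - f a') := (eq_div_iff hne).mpr hx0
      exact hx ⟨(b' - b) / (a - a'), by rw [map_div₀, map_sub, map_sub, ← hx']⟩
  -- affine transformations preserve the affine set
  have htrans : ∀ (x : L) (c d : K), c ≠ 0 →
      affineSet K (f c * x + f d) = affineSet K x := by
    intro x c d hc
    ext y
    simp only [affineSet, Set.mem_setOf_eq, ← hfdef]
    constructor
    · rintro ⟨a, b, ha, rfl⟩
      refine ⟨a * c, a * d + b, mul_ne_zero ha hc, ?_⟩
      rw [map_mul, map_add, map_mul]
      ring
    · rintro ⟨a, b, ha, rfl⟩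
      refine ⟨a / c, b - a / c * d, div_ne_zero ha hc, ?_⟩
      have h1 : f (a / c) * f c = f a := by
        rw [← map_mul, div_mul_cancel₀ a hc]
      rw [map_sub, map_mul]
      linear_combination x * h1.symm
  -- affine sets of elements of E are fixed
  have hfiximg : ∀ x : L, x ^ q ^ r = x →
      (fun y : L => y ^ q ^ r) '' affineSet K x = affineSet K x := by
    intro x hx
    ext y
    constructor
    · rintro ⟨z, ⟨a, b, ha, rfl⟩, rfl⟩
      refine ⟨a ^ q ^ r, b ^ q ^ r, pow_ne_zero _ ha, ?_⟩
      show (f a * x + f b) ^ q ^ r = f (a ^ q ^ r) * x + f (b ^ q ^ r)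
      rw [haddL r, mul_pow, hx, map_pow, map_pow]
    · rintro ⟨a, b, ha, rfl⟩
      obtain ⟨a', ha'⟩ := hsurjK r a
      obtain ⟨b', hb'⟩ := hsurjK r b
      simp only at ha' hb'
      have ha'0 : a' ≠ 0 := by
        intro hc
        apply ha
        rw [← ha', hc, zero_pow (by positivity : q ^ r ≠ 0)]
      refine ⟨f a' * x + f b', ⟨a', b', ha'0, rfl⟩, ?_⟩
      show (f a' * x + f b') ^ q ^ r = f a * x + f b
      rw [haddL r, mul_pow, hx, ← map_pow, ← map_pow, ha', hb']
  -- Fermat for K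
  have hpowcard1 : ∀ a : K, a ≠ 0 → a ^ (q ^ n - 1) = 1 := by
    intro a ha
    have := FiniteField.pow_card_sub_one_eq_one a ha
    rwa [hK] at this
  set E0 : ℕ := ∑ j ∈ Finset.range n, q ^ j with hE0def
  have hE0 : (q - 1) * E0 = q ^ n - 1 := geom_mul q n (by omega)
  have hqn1 : 2 ≤ q ^ n := Nat.one_lt_pow (by omega) (by omega)
  have hE0pos : 0 < E0 := by
    rcases Nat.eq_zero_or_pos E0 with h | h
    · rw [h, Nat.mul_zero] at hE0; omega
    · exact h
  have hSK1card : (Finset.univ.filter fun x : K => x ^ q = x).card = q := by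
    apply card_pow_fix q hq2
    rw [hK]
    simpa using Nat.sub_dvd_pow_sub_pow q 1 n
  -- multiplicative Hilbert 90 by counting
  have hmulH90 : ∀ a : K, a ^ E0 = 1 → ∃ c : K, c ≠ 0 ∧ c ^ q ^ r * a = c := by
    intro a haE
    set Cfin : Finset K := Finset.univ.filter fun x => x ^ E0 = 1 with hCdef
    set s0 : Finset K := Finset.univ.filter fun x : K => x ≠ 0 with hs0def
    have hs0card : s0.card = q ^ n - 1 := by
      rw [hs0def, Finset.filter_ne', Finset.card_erase_of_mem (Finset.mem_univ 0),
        Finset.card_univ, hK]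
    set θ : K → K := fun c => c / c ^ q ^ r with hθdef
    have hmem0 : ∀ c ∈ s0, θ c ∈ Cfin := by
      intro c hc
      have hc0 : c ≠ 0 := by
        have := (Finset.mem_filter.mp hc).2
        simpa [hs0def] using this
      have hqE : E0 * q = E0 + (q ^ n - 1) := by
        have h1 : E0 * q = E0 * (q - 1) + E0 := by
          have h2 : q - 1 + 1 = q := by omega
          calc E0 * q = E0 * (q - 1 + 1) := by rw [h2]
            _ = E0 * (q - 1) + E0 := by ring
        rw [h1, mul_comm E0 (q - 1), hE0]
        omega
      have hz : (c ^ E0) ^ q = c ^ E0 := by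
        rw [← pow_mul, hqE, pow_add, hpowcard1 c hc0, mul_one]
      have hziter : (c ^ E0) ^ q ^ r = c ^ E0 := hiterK _ hz r
      have hcE0 : c ^ E0 ≠ 0 := pow_ne_zero _ hc0
      have : θ c ^ E0 = 1 := by
        rw [hθdef]
        simp only
        rw [div_pow]
        have h3 : (c ^ q ^ r) ^ E0 = (c ^ E0) ^ q ^ r := by
          rw [← pow_mul c (q ^ r) E0, ← pow_mul c E0 (q ^ r), mul_comm]
        rw [h3, hziter, div_self hcE0]
      rw [hCdef]
      exact Finset.mem_filter.mpr ⟨Finset.mem_univ _, this⟩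
    have hfibθ : ∀ c ∈ s0, (s0.filter fun x => θ x = θ c).card = q - 1 := by
      intro c hc
      have hc0 : c ≠ 0 := by
        have := (Finset.mem_filter.mp hc).2
        simpa [hs0def] using this
      have himg : s0.filter (fun x => θ x = θ c)
          = ((Finset.univ.filter fun k : K => k ^ q = k).erase 0).image fun k => k * c := by
        ext x
        constructor
        · intro hx
          obtain ⟨hxs, hθx⟩ := Finset.mem_filter.mp hx
          have hx0 : x ≠ 0 := by
            have := (Finset.mem_filter.mp hxs).2
            simpa [hs0def] using this
          refine Finset.mem_image.mpr ⟨x / c, ?_, by field_simp⟩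
          rw [Finset.mem_erase]
          refine ⟨div_ne_zero hx0 hc0, ?_⟩
          rw [Finset.mem_filter]
          refine ⟨Finset.mem_univ _, ?_⟩
          apply hgcdK
          have hcr : (c : K) ^ q ^ r ≠ 0 := pow_ne_zero _ hc0
          have hxr : (x : K) ^ q ^ r ≠ 0 := pow_ne_zero _ hx0
          have hθx' : x / x ^ q ^ r = c / c ^ q ^ r := hθx
          have hcross : x * c ^ q ^ r = c * x ^ q ^ r := by
            have := (div_eq_div_iff hxr hcr).mp hθx'
            linear_combination this
          rw [div_pow, div_eq_div_iff hcr hc0]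
          linear_combination -hcross
        · intro hx
          obtain ⟨k, hk, rfl⟩ := Finset.mem_image.mp hx
          rw [Finset.mem_erase] at hk
          obtain ⟨hk0, hkmem⟩ := hk
          have hkq : k ^ q = k := (Finset.mem_filter.mp hkmem).2
          have hkr : k ^ q ^ r = k := hiterK k hkq r
          refine Finset.mem_filter.mpr ⟨?_, ?_⟩
          · rw [hs0def]
            exact Finset.mem_filter.mpr ⟨Finset.mem_univ _, mul_ne_zero hk0 hc0⟩
          · show (k * c) / (k * c) ^ q ^ r = c / c ^ q ^ r
            rw [mul_pow, hkr, mul_div_mul_left _ _ hk0]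
      rw [himg, Finset.card_image_of_injOn
          (Set.injOn_of_injective (fun k1 k2 h => mul_right_cancel₀ hc0 h)),
        Finset.card_erase_of_mem, hSK1card]
      exact Finset.mem_filter.mpr ⟨Finset.mem_univ _, by
        rw [zero_pow (by omega : q ≠ 0)]⟩
    have hIcard := card_image_mul_eq s0 θ (q - 1) hfibθ
    have hIcard' : (s0.image θ).card = E0 := by
      have h1 : (s0.image θ).card * (q - 1) = E0 * (q - 1) := by
        rw [hIcard, hs0card, ← hE0, mul_comm]
      exact Nat.eq_of_mul_eq_mul_right (by omega) h1
    have hCcard : Cfin.card ≤ E0 := by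
      have hP : (X ^ E0 - Polynomial.C 1 : Polynomial K) ≠ 0 :=
        Polynomial.X_pow_sub_C_ne_zero hE0pos 1
      have hle := card_root_set_le (X ^ E0 - Polynomial.C 1 : Polynomial K) hP
      rw [Polynomial.natDegree_X_pow_sub_C] at hle
      refine le_trans (Finset.card_le_card ?_) hle
      intro x hx
      simp only [hCdef, Finset.mem_filter, Finset.mem_univ, true_and] at hx ⊢
      simp [hx]
    have hsubI : s0.image θ ⊆ Cfin := by
      intro y hy
      obtain ⟨c, hc, rfl⟩ := Finset.mem_image.mp hy
      exact hmem0 c hc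
    have hCI : s0.image θ = Cfin :=
      Finset.eq_of_subset_of_card_le hsubI (by rw [hIcard']; exact hCcard)
    have haC : a ∈ Cfin := Finset.mem_filter.mpr ⟨Finset.mem_univ _, haE⟩
    rw [← hCI] at haC
    obtain ⟨c, hc, hca⟩ := Finset.mem_image.mp haC
    have hc0 : c ≠ 0 := by
      have := (Finset.mem_filter.mp hc).2
      simpa [hs0def] using this
    refine ⟨c, hc0, ?_⟩
    have hca' : c / c ^ q ^ r = a := hca
    rw [← hca']
    field_simp
  -- additive Hilbert 90 by counting
  have haddH90 : ∀ b : K, (∑ j ∈ Finset.range n, b ^ q ^ j) = 0 →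
      ∃ d : K, d - d ^ q ^ r = b := by
    intro b hb
    set ψ : K → K := fun d => d - d ^ q ^ r with hψdef
    set Cfin2 : Finset K :=
      Finset.univ.filter fun x : K => ∑ j ∈ Finset.range n, x ^ q ^ j = 0 with hC2def
    have htrfrob : ∀ x : K,
        (∑ j ∈ Finset.range n, (x ^ q) ^ q ^ j) = ∑ j ∈ Finset.range n, x ^ q ^ j := by
      intro x
      have h1 : ∀ j : ℕ, (x ^ q) ^ q ^ j = x ^ q ^ (j + 1) := by
        intro j
        rw [← pow_mul x q (q ^ j), mul_comm q (q ^ j), ← pow_succ]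
      rw [Finset.sum_congr rfl fun j _ => h1 j]
      have h2 := Finset.sum_range_succ' (fun j => x ^ q ^ j) n
      have h3 := Finset.sum_range_succ (fun j => x ^ q ^ j) n
      have h4 : x ^ q ^ n = x := hcardKpow x
      have h5 : x ^ q ^ 0 = x := by rw [pow_zero, pow_one]
      rw [h4] at h3
      rw [h5] at h2
      linear_combination h3 - h2
    have htrpow : ∀ (m : ℕ) (x : K),
        (∑ j ∈ Finset.range n, (x ^ q ^ m) ^ q ^ j) = ∑ j ∈ Finset.range n, x ^ q ^ j := by
      intro m
      induction m with
      | zero => intro x; simp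
      | succ m ih =>
        intro x
        have h1 : x ^ q ^ (m + 1) = (x ^ q ^ m) ^ q := by
          rw [← pow_mul x (q ^ m) q, pow_succ]
        rw [h1, htrfrob (x ^ q ^ m), ih x]
    have hsubC : Finset.univ.image ψ ⊆ Cfin2 := by
      intro y hy
      obtain ⟨d, _, rfl⟩ := Finset.mem_image.mp hy
      rw [hC2def]
      refine Finset.mem_filter.mpr ⟨Finset.mem_univ _, ?_⟩
      have h1 : ∀ j : ℕ, ψ d ^ q ^ j = d ^ q ^ j - (d ^ q ^ r) ^ q ^ j := by
        intro j
        rw [hψdef]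
        exact hsubK j d (d ^ q ^ r)
      rw [Finset.sum_congr rfl fun j _ => h1 j, Finset.sum_sub_distrib, htrpow r d, sub_self]
    have hfibψ : ∀ d ∈ (Finset.univ : Finset K), ((Finset.univ : Finset K).filter
        fun x => ψ x = ψ d).card = q := by
      intro d _
      have himg : (Finset.univ : Finset K).filter (fun x => ψ x = ψ d)
          = (Finset.univ.filter fun k : K => k ^ q = k).image fun k => d + k := by
        ext x
        constructor
        · intro hx
          have hψx : x - x ^ q ^ r = d - d ^ q ^ r := (Finset.mem_filter.mp hx).2
          refine Finset.mem_image.mpr ⟨x - d, ?_, by ring⟩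
          refine Finset.mem_filter.mpr ⟨Finset.mem_univ _, ?_⟩
          apply hgcdK
          rw [hsubK r x d]
          linear_combination -hψx
        · intro hx
          obtain ⟨k, hk, rfl⟩ := Finset.mem_image.mp hx
          have hkq : k ^ q = k := (Finset.mem_filter.mp hk).2
          have hkr : k ^ q ^ r = k := hiterK k hkq r
          refine Finset.mem_filter.mpr ⟨Finset.mem_univ _, ?_⟩
          show (d + k) - (d + k) ^ q ^ r = d - d ^ q ^ r
          rw [haddK r d k, hkr]
          ring
      rw [himg, Finset.card_image_of_injOn
          (Set.injOn_of_injective fun k1 k2 h => by exact add_left_cancel h),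
        hSK1card]
    have hI2 := card_image_mul_eq (Finset.univ : Finset K) ψ q hfibψ
    have hI2card : (Finset.univ.image ψ).card = q ^ (n - 1) := by
      apply Nat.eq_of_mul_eq_mul_right (show 0 < q by omega)
      rw [hI2, Finset.card_univ, hK, ← pow_succ]
      congr 1
      omega
    have hC2card : Cfin2.card ≤ q ^ (n - 1) := card_trace_zero_le q n hq2 (by omega)
    have hCI2 : Finset.univ.image ψ = Cfin2 :=
      Finset.eq_of_subset_of_card_le hsubC (by rw [hI2card]; exact hC2card)
    have hbC : b ∈ Cfin2 := Finset.mem_filter.mpr ⟨Finset.mem_univ _, hb⟩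
    rw [← hCI2] at hbC
    obtain ⟨d, _, hd⟩ := Finset.mem_image.mp hbC
    exact ⟨d, hd⟩
  -- the degree-r elements of E = F_{q^r} inside L
  set Dfin : Finset L :=
    Finset.univ.filter (fun x : L => x ^ q ^ r = x ∧ ¬ x ^ q = x) with hDdef
  have hDcard : Dfin.card = q ^ r - q := by
    have hsplit : Dfin = SL r \ SL 1 := by
      ext x
      simp only [hDdef, hSLdef, Finset.mem_sdiff, Finset.mem_filter, Finset.mem_univ,
        true_and, pow_one]
    rw [hsplit, Finset.card_sdiff_of_subset]
    · rw [hSLcard r (by omega) (dvd_mul_left r n), hSLcard 1 one_pos (one_dvd _), pow_one]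
    · intro x hx
      simp only [hSLdef, Finset.mem_filter, Finset.mem_univ, true_and, pow_one] at hx ⊢
      exact hiterL x hx r
  set Φ : L → Set L := fun x => affineSet K x with hΦdef
  have hmain : fixedAffineSets K L r (q ^ r) = ↑(Dfin.image Φ) := by
    ext A
    simp only [fixedAffineSets, Set.mem_setOf_eq, Finset.coe_image, Set.mem_image,
      Finset.mem_coe]
    constructor
    · rintro ⟨⟨α, hαdeg, rfl⟩, himg⟩
      have hαnr : α ∉ Set.range ⇑f := (hminpoly α).mp hαdeg
      have hαself : α ∈ affineSet K α := ⟨1, 0, one_ne_zero, by simp⟩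
      have hαr : (α ^ q ^ r) ∈ affineSet K α := himg ▸ ⟨α, hαself, rfl⟩
      obtain ⟨a, b, ha, hab⟩ := hαr
      rw [← hfdef] at hab
      -- iterate the Frobenius relation
      have hiter1 : ∀ j : ℕ, ∃ s : K,
          α ^ q ^ (r * j) = f (∏ i ∈ Finset.range j, a ^ q ^ (r * i)) * α + f s := by
        intro j
        induction j with
        | zero => exact ⟨0, by simp⟩
        | succ j ih =>
          obtain ⟨s, hs⟩ := ih
          refine ⟨(∏ i ∈ Finset.range j, a ^ q ^ (r * i)) ^ q ^ r * b + s ^ q ^ r, ?_⟩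
          have hprod : (∏ i ∈ Finset.range j, a ^ q ^ (r * i)) ^ q ^ r * a
              = ∏ i ∈ Finset.range (j + 1), a ^ q ^ (r * i) := by
            rw [Finset.prod_range_succ']
            congr 1
            · rw [← Finset.prod_pow]
              refine Finset.prod_congr rfl fun i _ => ?_
              rw [← powPowComp]
              have he' : r * i + r = r * (i + 1) := by ring
              rw [he']
            · simp
          have hre : r * (j + 1) = r * j + r := by ring
          rw [hre, powPowComp, hs, haddL r, mul_pow, hab, ← map_pow, ← map_pow, ← hprod,
            map_add, map_mul, map_mul]
          ring
      obtain ⟨s, hsn⟩ := hiter1 n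
      have hα1 : α ^ q ^ (r * n) = α := by rw [mul_comm]; exact hcardLpow α
      rw [hα1] at hsn
      have h0 : f 1 * α + f 0 = f (∏ i ∈ Finset.range n, a ^ q ^ (r * i)) * α + f s := by
        rw [map_one, map_zero, one_mul, add_zero, ← hsn]
      have hPn : (1 : K) = ∏ i ∈ Finset.range n, a ^ q ^ (r * i) :=
        (huniq α hαnr _ _ _ _ h0).1
      have haE : a ^ E0 = 1 := by
        have h1 : a ^ (∑ i ∈ Finset.range n, q ^ (r * i)) = 1 := by
          rw [← Finset.prod_pow_eq_pow_sum]
          exact hPn.symm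
        obtain ⟨m, hm⟩ := exists_sum_shift q n r (by omega) (by omega) hr1 hcop
        rw [hm, pow_add, pow_mul, hpowcard1 a ha, one_pow, mul_one] at h1
        exact h1
      obtain ⟨c, hc0, hc⟩ := hmulH90 a haE
      set b' : K := c ^ q ^ r * b with hb'def
      have hα' : (f c * α) ^ q ^ r = f c * α + f b' := by
        rw [mul_pow, ← map_pow, hab, hb'def]
        calc f (c ^ q ^ r) * (f a * α + f b)
            = f (c ^ q ^ r * a) * α + f (c ^ q ^ r * b) := by rw [map_mul, map_mul]; ring
          _ = f c * α + f (c ^ q ^ r * b) := by rw [hc]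
      have hiter2 : ∀ j : ℕ, (f c * α) ^ q ^ (r * j)
          = f c * α + f (∑ i ∈ Finset.range j, b' ^ q ^ (r * i)) := by
        intro j
        induction j with
        | zero => simp
        | succ j ih =>
          have hS : (∑ i ∈ Finset.range j, b' ^ q ^ (r * i)) ^ q ^ r
              = ∑ i ∈ Finset.range j, b' ^ q ^ (r * (i + 1)) := by
            rw [sum_pow_dist (fun i => b' ^ q ^ (r * i)) (Finset.range j) (q ^ r)
              (haddK r) (zero_pow (by positivity : q ^ r ≠ 0))]
            refine Finset.sum_congr rfl fun i _ => ?_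
            rw [← powPowComp]
            have he' : r * i + r = r * (i + 1) := by ring
            rw [he']
          have hsum : b' + (∑ i ∈ Finset.range j, b' ^ q ^ (r * i)) ^ q ^ r
              = ∑ i ∈ Finset.range (j + 1), b' ^ q ^ (r * i) := by
            rw [Finset.sum_range_succ', hS]
            simp [add_comm]
          have hre : r * (j + 1) = r * j + r := by ring
          rw [hre, powPowComp, ih, haddL r, hα', ← map_pow, ← hsum, map_add]
          ring
      have hSn0 : (∑ i ∈ Finset.range n, b' ^ q ^ (r * i)) = 0 := by
        have h1 := hiter2 n
        have h2 : (f c * α) ^ q ^ (r * n) = f c * α := by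
          rw [mul_comm r n]; exact hcardLpow _
        rw [h2] at h1
        have h3 : f (∑ i ∈ Finset.range n, b' ^ q ^ (r * i)) = 0 :=
          (left_eq_add.mp h1)
        apply hfinj
        rw [h3, map_zero]
      have htr0 : (∑ j ∈ Finset.range n, b' ^ q ^ j) = 0 := by
        have hmodred : ∀ i : ℕ, b' ^ q ^ (r * i) = b' ^ q ^ (r * i % n) := by
          intro i
          conv_lhs => rw [show r * i = r * i % n + n * (r * i / n) from
            (Nat.mod_add_div _ _).symm]
          rw [powPowComp]
          exact pow_fix_mul (hcardKpow _) _
        rw [Finset.sum_congr rfl fun i _ => hmodred i] at hSn0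
        rw [sum_mod_bij (fun j => b' ^ q ^ j) (by omega : 1 < n) hcop] at hSn0
        exact hSn0
      obtain ⟨d, hd⟩ := haddH90 b' htr0
      have hfc0 : f c ≠ 0 := fun h => hc0 (hfinj (by rw [h, map_zero]))
      refine ⟨f c * α + f d, ?_, ?_⟩
      · rw [hDdef]
        refine Finset.mem_filter.mpr ⟨Finset.mem_univ _, ?_, ?_⟩
        · rw [haddL r, hα', ← map_pow]
          have hbd : b' + d ^ q ^ r = d := by linear_combination -hd
          rw [add_assoc, ← map_add, hbd]
        · intro hfix
          have hβn : (f c * α + f d) ^ q ^ n = f c * α + f d := hiterL _ hfix n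
          obtain ⟨e, he⟩ := (hmem_range_iff _).mp hβn
          apply hαnr
          refine ⟨(e - d) / c, ?_⟩
          rw [map_div₀, map_sub]
          rw [div_eq_iff hfc0]
          linear_combination he
      · show affineSet K (f c * α + f d) = affineSet K α
        exact htrans α c d hc0
    · rintro ⟨β, hβmem, rfl⟩
      have hβmem' : β ^ q ^ r = β ∧ ¬ β ^ q = β := by
        have := Finset.mem_filter.mp (by rwa [hDdef] at hβmem)
        exact this.2
      obtain ⟨hβr, hβ1⟩ := hβmem'
      have hβnr : β ∉ Set.range ⇑f := fun hmem =>
        hβ1 (hgcdL β hβr ((hmem_range_iff β).mpr hmem))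
      exact ⟨⟨β, (hminpoly β).mpr hβnr, rfl⟩, hfiximg β hβr⟩
  have haddL1 : ∀ x y : L, (x + y) ^ q = x ^ q + y ^ q := by
    intro x y; have := haddL 1 x y; simpa [pow_one] using this
  have hsubL1 : ∀ x y : L, (x - y) ^ q = x ^ q - y ^ q := by
    intro x y; have := hsubL 1 x y; simpa [pow_one] using this
  rw [hmain, Set.ncard_coe_finset]
  have hfib : ∀ α ∈ Dfin, (Dfin.filter fun x => Φ x = Φ α).card = q * (q - 1) := by
    intro α hα
    obtain ⟨hαr, hα1⟩ : α ^ q ^ r = α ∧ ¬ α ^ q = α := by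
      have := Finset.mem_filter.mp (by rwa [hDdef] at hα)
      exact this.2
    have hαn : ¬ α ^ q ^ n = α := fun h => hα1 (hgcdL α hαr h)
    have hαnr : α ∉ Set.range ⇑f := fun h => hαn ((hmem_range_iff α).mpr h)
    have himg : Dfin.filter (fun x => Φ x = Φ α)
        = (((SL 1).erase 0) ×ˢ (SL 1)).image fun cd => cd.1 * α + cd.2 := by
      ext x
      constructor
      · intro hx
        obtain ⟨hxD, hΦx⟩ := Finset.mem_filter.mp hx
        obtain ⟨hxr, hx1⟩ : x ^ q ^ r = x ∧ ¬ x ^ q = x := by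
          have := Finset.mem_filter.mp (by rwa [hDdef] at hxD)
          exact this.2
        have hxself : x ∈ affineSet K x := ⟨1, 0, one_ne_zero, by simp⟩
        have hxmem : x ∈ affineSet K α := by
          have hΦx' : affineSet K x = affineSet K α := hΦx
          exact hΦx' ▸ hxself
        obtain ⟨a, b, ha, hab⟩ := hxmem
        rw [← hfdef] at hab
        have hfr' : f (a ^ q ^ r) * α + f (b ^ q ^ r) = f a * α + f b := by
          have h1 : x ^ q ^ r = (f a * α + f b) ^ q ^ r := by rw [← hab]
          rw [hxr, hab] at h1
          rw [haddL r, mul_pow, hαr, ← map_pow, ← map_pow] at h1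
          exact h1.symm
        obtain ⟨haa, hbb⟩ := huniq α hαnr _ _ _ _ hfr'
        have haq : a ^ q = a := hgcdK a haa
        have hbq : b ^ q = b := hgcdK b hbb
        refine Finset.mem_image.mpr ⟨(f a, f b), ?_, hab.symm⟩
        rw [Finset.mem_product]
        refine ⟨?_, ?_⟩
        · show f a ∈ (SL 1).erase 0
          rw [Finset.mem_erase]
          refine ⟨fun h => ha (hfinj (by rw [h, map_zero])), ?_⟩
          simp only [hSLdef, Finset.mem_filter, Finset.mem_univ, true_and, pow_one]
          rw [← map_pow, haq]
        · show f b ∈ SL 1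
          simp only [hSLdef, Finset.mem_filter, Finset.mem_univ, true_and, pow_one]
          rw [← map_pow, hbq]
      · intro hx
        obtain ⟨⟨c, d⟩, hcd, rfl⟩ := Finset.mem_image.mp hx
        rw [Finset.mem_product] at hcd
        obtain ⟨hcmem, hdmem⟩ := hcd
        rw [Finset.mem_erase] at hcmem
        obtain ⟨hc0, hcS⟩ := hcmem
        have hcq : c ^ q = c := by
          have := Finset.mem_filter.mp hcS
          simpa [hSLdef, pow_one] using this.2
        have hdq : d ^ q = d := by
          have := Finset.mem_filter.mp hdmem
          simpa [hSLdef, pow_one] using this.2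
        have hcr : c ^ q ^ r = c := hiterL c hcq r
        have hdr : d ^ q ^ r = d := hiterL d hdq r
        refine Finset.mem_filter.mpr ⟨?_, ?_⟩
        · rw [hDdef]
          refine Finset.mem_filter.mpr ⟨Finset.mem_univ _, ?_, ?_⟩
          · simp only
            rw [haddL r, mul_pow, hαr, hcr, hdr]
          · intro hfix
            apply hα1
            have h1 : (c * α + d) ^ q = c * α ^ q + d := by
              rw [haddL1, mul_pow, hcq, hdq]
            rw [h1] at hfix
            have h2 : c * α ^ q = c * α := by linear_combination hfix
            exact mul_left_cancel₀ hc0 h2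
        · obtain ⟨a, ha⟩ : c ∈ Set.range ⇑f := (hmem_range_iff c).mp (hiterL c hcq n)
          obtain ⟨b, hb⟩ : d ∈ Set.range ⇑f := (hmem_range_iff d).mp (hiterL d hdq n)
          have ha0 : a ≠ 0 := fun h => hc0 (by rw [← ha, h, map_zero])
          show affineSet K (c * α + d) = affineSet K α
          rw [← ha, ← hb]
          exact htrans α a b ha0
    have hinj : Set.InjOn (fun cd : L × L => cd.1 * α + cd.2)
        ↑(((SL 1).erase 0) ×ˢ (SL 1)) := by
      rintro ⟨c, d⟩ hcd ⟨c', d'⟩ hcd' heq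
      simp only at heq
      have hcd1 := Finset.mem_product.mp (Finset.mem_coe.mp hcd)
      have hcd1' := Finset.mem_product.mp (Finset.mem_coe.mp hcd')
      have hcq : c ^ q = c := by
        have := Finset.mem_filter.mp (Finset.mem_of_mem_erase hcd1.1)
        simpa [hSLdef, pow_one] using this.2
      have hdq : d ^ q = d := by
        have := Finset.mem_filter.mp hcd1.2
        simpa [hSLdef, pow_one] using this.2
      have hcq' : c' ^ q = c' := by
        have := Finset.mem_filter.mp (Finset.mem_of_mem_erase hcd1'.1)
        simpa [hSLdef, pow_one] using this.2
      have hdq' : d' ^ q = d' := by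
        have := Finset.mem_filter.mp hcd1'.2
        simpa [hSLdef, pow_one] using this.2
      by_cases hcc : c = c'
      · subst hcc
        have : d = d' := by linear_combination heq
        rw [this]
      · exfalso
        have hsub : c - c' ≠ 0 := sub_ne_zero.mpr hcc
        have hαval : α = (d' - d) / (c - c') := by
          rw [eq_div_iff hsub]
          linear_combination heq
        apply hα1
        rw [hαval, div_pow, hsubL1, hsubL1, hcq, hdq, hcq', hdq']
    rw [himg, Finset.card_image_of_injOn hinj, Finset.card_product,
      Finset.card_erase_of_mem, hSLcard 1 one_pos (one_dvd _), pow_one]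
    · ring
    · simp only [hSLdef, Finset.mem_filter, Finset.mem_univ, true_and, pow_one]
      exact zero_pow (by omega)
  have hcount := card_image_mul_eq Dfin Φ (q * (q - 1)) hfib
  have hdvd2 : (q - 1) ∣ q ^ (r - 1) - 1 := by
    simpa using Nat.sub_dvd_pow_sub_pow q 1 (r - 1)
  have hM1 : (q ^ (r - 1) - 1) / (q - 1) * (q - 1) = q ^ (r - 1) - 1 :=
    Nat.div_mul_cancel hdvd2
  have hqr : q ^ r = q ^ (r - 1) * q := by
    rw [← pow_succ]
    congr 1
    omega
  have hMQ : (q ^ (r - 1) - 1) / (q - 1) * (q * (q - 1)) = q ^ r - q := by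
    calc (q ^ (r - 1) - 1) / (q - 1) * (q * (q - 1))
        = ((q ^ (r - 1) - 1) / (q - 1) * (q - 1)) * q := by ring
      _ = (q ^ (r - 1) - 1) * q := by rw [hM1]
      _ = q ^ (r - 1) * q - 1 * q := by rw [tsub_mul]
      _ = q ^ r - q := by rw [← hqr, one_mul]
  apply Nat.eq_of_mul_eq_mul_right (show 0 < q * (q - 1) from
    Nat.mul_pos (by omega) (by omega))
  rw [hcount, hDcard, hMQ]
end
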